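/- arXiv:2102.10318 — 7 statements merged into one kernel-verified Lean document; each statement's English description precedes it below -/
import Mathlib

section
/- For elements A, B of a Banach algebra, real numbers a > 0, b > 0, c > 0 and every t ≥ 0, the doubly indexed family ( Q_{k,m}^{A,B} · t^{ka+mb} / Γ(ka+mb+c) )_{(k,m) ∈ ℕ×ℕ} is summable in norm; hence the bivariate Mittag-Leffler type operator function 𝓔_{a,b,c}^{A,B}(t) = ∑_{k=0}^∞ ∑_{m=0}^∞ Q_{k,m}^{A,B} t^{ka+mb} / Γ(ka+mb+c) is well defined. -/
/-- The operators `Q_{k,m}^{A,B}` from the paper: `Q k 0 = A^k`, `Q 0 m = B^m`, and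
`Q k m = ∑_{l=0}^{k} A^{k-l} B Q l (m-1)` for `m ≥ 1`. -/
noncomputable def Q {𝔸 : Type*} [Ring 𝔸] (A B : 𝔸) : ℕ → ℕ → 𝔸
  | k, 0 => A ^ k
  | k, m + 1 => ∑ l ∈ Finset.range (k + 1), A ^ (k - l) * B * Q A B l m

/-- Hockey-stick identity in the form we need. -/
private lemma hockey (m : ℕ) : ∀ k : ℕ,
    ∑ l ∈ Finset.range (k + 1), (l + m).choose m = (k + m + 1).choose (m + 1) := by
  intro k
  induction k with
  | zero => simp
  | succ k ih =>
    rw [Finset.sum_range_succ, ih]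
    have h1 : k + 1 + m + 1 = (k + m + 1) + 1 := by ring
    rw [h1, Nat.choose_succ_succ' (k + m + 1) m]
    have h2 : k + 1 + m = k + m + 1 := by ring
    rw [h2]
    omega

private lemma choose_le_two_pow (n m : ℕ) : n.choose m ≤ 2 ^ n := by
  rcases le_or_gt m n with h | h
  · calc n.choose m ≤ ∑ i ∈ Finset.range (n + 1), n.choose i :=
        Finset.single_le_sum (fun i _ => Nat.zero_le _)
          (Finset.mem_range.mpr (Nat.lt_succ_of_le h))
    _ = 2 ^ n := Nat.sum_range_choose n
  · simp [Nat.choose_eq_zero_of_lt h]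

private lemma Q_norm_le {𝔸 : Type*} [NormedRing 𝔸] [NormOneClass 𝔸] (A B : 𝔸) (M : ℝ)
    (hA : ‖A‖ ≤ M) (hB : ‖B‖ ≤ M) (hM : 1 ≤ M) :
    ∀ m k : ℕ, ‖Q A B k m‖ ≤ ((k + m).choose m : ℝ) * M ^ (k + m) := by
  have hM0 : (0 : ℝ) ≤ M := le_trans zero_le_one hM
  intro m
  induction m with
  | zero =>
    intro k
    simp only [Q, Nat.add_zero, Nat.choose_zero_right, Nat.cast_one, one_mul]
    calc ‖A ^ k‖ ≤ ‖A‖ ^ k := norm_pow_le A k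
    _ ≤ M ^ k := pow_le_pow_left₀ (norm_nonneg A) hA k
  | succ m ih =>
    intro k
    have key : ∀ l ∈ Finset.range (k + 1),
        ‖A ^ (k - l) * B * Q A B l m‖ ≤ ((l + m).choose m : ℝ) * M ^ (k + m + 1) := by
      intro l hl
      have hlk : l ≤ k := Nat.lt_succ_iff.mp (Finset.mem_range.mp hl)
      have h1 : ‖A ^ (k - l) * B * Q A B l m‖ ≤ ‖A ^ (k - l)‖ * ‖B‖ * ‖Q A B l m‖ := by
        calc ‖A ^ (k - l) * B * Q A B l m‖ ≤ ‖A ^ (k - l) * B‖ * ‖Q A B l m‖ :=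
              norm_mul_le _ _
        _ ≤ ‖A ^ (k - l)‖ * ‖B‖ * ‖Q A B l m‖ := by
              gcongr
              exact norm_mul_le _ _
      refine h1.trans ?_
      have h2 : ‖A ^ (k - l)‖ * ‖B‖ * ‖Q A B l m‖ ≤
          M ^ (k - l) * M * (((l + m).choose m : ℝ) * M ^ (l + m)) := by
        have hQ := ih l
        have hAk : ‖A ^ (k - l)‖ ≤ M ^ (k - l) :=
          (norm_pow_le A _).trans (pow_le_pow_left₀ (norm_nonneg A) hA _)
        have hQ0 : 0 ≤ ‖Q A B l m‖ := norm_nonneg _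
        have hMpow : (0:ℝ) ≤ M ^ (k - l) * M := by positivity
        exact mul_le_mul (mul_le_mul hAk hB (norm_nonneg _) (by positivity)) hQ hQ0 hMpow
      refine h2.trans (le_of_eq ?_)
      have hexp : (k - l) + 1 + (l + m) = k + m + 1 := by omega
      calc M ^ (k - l) * M * (((l + m).choose m : ℝ) * M ^ (l + m))
          = ((l + m).choose m : ℝ) * (M ^ (k - l) * M ^ 1 * M ^ (l + m)) := by ring
      _ = ((l + m).choose m : ℝ) * M ^ ((k - l) + 1 + (l + m)) := by
            rw [← pow_add, ← pow_add]
      _ = ((l + m).choose m : ℝ) * M ^ (k + m + 1) := by rw [hexp]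
    calc ‖Q A B k (m + 1)‖ = ‖∑ l ∈ Finset.range (k + 1), A ^ (k - l) * B * Q A B l m‖ := by
          rw [Q]
    _ ≤ ∑ l ∈ Finset.range (k + 1), ‖A ^ (k - l) * B * Q A B l m‖ := norm_sum_le _ _
    _ ≤ ∑ l ∈ Finset.range (k + 1), ((l + m).choose m : ℝ) * M ^ (k + m + 1) :=
          Finset.sum_le_sum key
    _ = (∑ l ∈ Finset.range (k + 1), ((l + m).choose m : ℝ)) * M ^ (k + m + 1) := by
          rw [← Finset.sum_mul]
    _ = ((k + m + 1).choose (m + 1) : ℝ) * M ^ (k + m + 1) := by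
          rw [← Nat.cast_sum, hockey m k]
    _ = ((k + (m + 1)).choose (m + 1) : ℝ) * M ^ (k + (m + 1)) := by
          norm_num [Nat.add_assoc]
    _ ≤ ((k + (m + 1)).choose (m + 1) : ℝ) * M ^ (k + (m + 1)) := le_refl _

private lemma pow_le_pow_mul_factorial (s : ℕ) (hs : 1 ≤ s) :
    ∀ k : ℕ, s ^ k ≤ s ^ s * k.factorial := by
  intro k
  induction k with
  | zero => simpa using Nat.one_le_pow s s hs
  | succ k ih =>
    rcases le_or_gt (k + 1) s with h | h
    · calc s ^ (k + 1) ≤ s ^ s := Nat.pow_le_pow_right hs h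
      _ ≤ s ^ s * (k + 1).factorial := Nat.le_mul_of_pos_right _ (Nat.factorial_pos _)
    · have hsk : s ≤ k + 1 := Nat.lt_succ_iff.mp (Nat.lt_succ_of_lt h)
      calc s ^ (k + 1) = s ^ k * s := pow_succ s k
      _ ≤ s ^ s * k.factorial * (k + 1) := Nat.mul_le_mul ih (by omega)
      _ = s ^ s * (k + 1).factorial := by
            rw [Nat.factorial_succ]; ring

private lemma summable_aux : Summable (fun n : ℕ => ((n : ℝ) + 1) ^ 4 * (1 / 2) ^ n) := by
  have h := summable_pow_mul_geometric_of_norm_lt_one (R := ℝ) 4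
    (r := 1 / 2) (by rw [Real.norm_eq_abs, abs_of_nonneg (by norm_num : (0:ℝ) ≤ 1/2)]; norm_num)
  have h2 := (h.comp_injective Nat.succ_injective).mul_left 2
  refine h2.congr fun n => ?_
  simp only [Function.comp_apply, Nat.succ_eq_add_one]
  push_cast
  ring

set_option maxHeartbeats 1000000 in
/-- For `a, b, c > 0` and `t ≥ 0`, the family
`Q_{k,m}^{A,B} t^{ka+mb} / Γ(ka+mb+c)`, `(k,m) ∈ ℕ × ℕ`, is summable in norm, so the bivariate
Mittag-Leffler type operator function `𝓔_{a,b,c}^{A,B}(t)` is well defined. -/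
theorem summable_mittagLeffler_Q {𝔸 : Type*} [NormedRing 𝔸] [NormOneClass 𝔸]
    [NormedAlgebra ℝ 𝔸] [CompleteSpace 𝔸] (A B : 𝔸) (a b c : ℝ)
    (ha : 0 < a) (hb : 0 < b) (hc : 0 < c) (t : ℝ) (ht : 0 ≤ t) :
    Summable (fun p : ℕ × ℕ =>
      ‖(t ^ ((p.1 : ℝ) * a + (p.2 : ℝ) * b) /
          Real.Gamma ((p.1 : ℝ) * a + (p.2 : ℝ) * b + c)) • Q A B p.1 p.2‖) := by
  classical
  set F : ℕ × ℕ → ℝ := fun p =>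
    ‖(t ^ ((p.1 : ℝ) * a + (p.2 : ℝ) * b) /
        Real.Gamma ((p.1 : ℝ) * a + (p.2 : ℝ) * b + c)) • Q A B p.1 p.2‖ with hFdef
  have hF0 : ∀ p, 0 ≤ F p := fun p => norm_nonneg _
  -- constants
  set M : ℝ := max 1 (max ‖A‖ ‖B‖) with hMdef
  have hM1 : (1 : ℝ) ≤ M := le_max_left _ _
  have hM0 : (0 : ℝ) ≤ M := le_trans zero_le_one hM1
  set T : ℝ := max 1 (max (t ^ a) (t ^ b)) with hTdef
  have hT1 : (1 : ℝ) ≤ T := le_max_left _ _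
  have hT0 : (0 : ℝ) ≤ T := le_trans zero_le_one hT1
  set R : ℝ := 2 * M * T with hRdef
  have hR2 : (2 : ℝ) ≤ R := by
    calc (2 : ℝ) = 2 * 1 * 1 := by norm_num
    _ ≤ 2 * M * T := by gcongr <;> norm_num
  have hR0 : (0 : ℝ) ≤ R := by linarith
  set μ : ℝ := min a b with hμdef
  have hμ : 0 < μ := lt_min ha hb
  set ν : ℝ := max a b with hνdef
  have hν : 0 < ν := lt_of_lt_of_le ha (le_max_left _ _)
  set K : ℝ := ν + c + 2 with hKdef
  have hK0 : 0 < K := by positivity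
  -- the dominating function on antidiagonals
  set P : ℕ → ℝ := fun n => ((n : ℝ) * ν + c) * ((n : ℝ) * ν + c + 1) * ((n : ℝ) * ν + c + 2)
    with hPdef
  have hP0 : ∀ n, 0 ≤ P n := by
    intro n
    have h0 : (0 : ℝ) ≤ (n : ℝ) * ν := by positivity
    have h1 : (0 : ℝ) < (n : ℝ) * ν + c := by linarith
    have h2 : (0 : ℝ) < (n : ℝ) * ν + c + 1 := by linarith
    have h3 : (0 : ℝ) < (n : ℝ) * ν + c + 2 := by linarith
    exact (mul_pos (mul_pos h1 h2) h3).le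
  set Bb : ℕ → ℝ := fun n => R ^ n * P n / ((Nat.floor ((n : ℝ) * μ) + 1).factorial : ℝ)
    with hBdef
  have hBb0 : ∀ n, 0 ≤ Bb n := by
    intro n
    have := hP0 n
    have : (0 : ℝ) < ((Nat.floor ((n : ℝ) * μ) + 1).factorial : ℝ) := by
      exact_mod_cast Nat.factorial_pos _
    positivity
  -- pointwise bound F p ≤ Bb (p.1 + p.2)
  have key : ∀ p : ℕ × ℕ, F p ≤ Bb (p.1 + p.2) := by
    rintro ⟨k, m⟩
    set n : ℕ := k + m with hn
    set x : ℝ := (k : ℝ) * a + (m : ℝ) * b with hx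
    have hx0 : 0 ≤ x := by positivity
    set z : ℝ := x + c with hz
    have hz0 : 0 < z := by positivity
    have hΓ : 0 < Real.Gamma z := Real.Gamma_pos_of_pos hz0
    -- rewrite the norm
    have hFeq : F (k, m) = (t ^ x / Real.Gamma z) * ‖Q A B k m‖ := by
      simp only [hFdef]
      rw [norm_smul, Real.norm_eq_abs, abs_of_nonneg]
      positivity
    -- bound on t ^ x
    have h1 : t ^ x ≤ T ^ n := by
      rcases eq_or_lt_of_le ht with h0 | h0
      · have : t = 0 := h0.symm
        subst this
        calc (0 : ℝ) ^ x ≤ 1 := Real.zero_rpow_le_one x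
        _ ≤ T ^ n := one_le_pow₀ hT1
      · have hta : t ^ a ≤ T := le_trans (le_max_left _ _) (le_max_right _ _)
        have htb : t ^ b ≤ T := le_trans (le_max_right _ _) (le_max_right _ _)
        have e1 : t ^ ((k : ℝ) * a) = (t ^ a) ^ k := by
          rw [mul_comm, Real.rpow_mul ht, Real.rpow_natCast]
        have e2 : t ^ ((m : ℝ) * b) = (t ^ b) ^ m := by
          rw [mul_comm, Real.rpow_mul ht, Real.rpow_natCast]
        calc t ^ x = t ^ ((k : ℝ) * a) * t ^ ((m : ℝ) * b) := Real.rpow_add h0 _ _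
        _ = (t ^ a) ^ k * (t ^ b) ^ m := by rw [e1, e2]
        _ ≤ T ^ k * T ^ m :=
              mul_le_mul (pow_le_pow_left₀ (Real.rpow_nonneg ht a) hta k)
                (pow_le_pow_left₀ (Real.rpow_nonneg ht b) htb m)
                (pow_nonneg (Real.rpow_nonneg ht b) m) (pow_nonneg hT0 k)
        _ = T ^ n := by rw [← pow_add]
    -- bound on the operator norm
    have h2 : ‖Q A B k m‖ ≤ 2 ^ n * M ^ n := by
      have hq := Q_norm_le A B M
        (le_trans (le_max_left _ _) (le_max_right _ _))
        (le_trans (le_max_right _ _) (le_max_right _ _)) hM1 m k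
      refine hq.trans ?_
      have hch : ((k + m).choose m : ℝ) ≤ (2 : ℝ) ^ (k + m) := by
        exact_mod_cast choose_le_two_pow (k + m) m
      have h2n : ((2:ℝ)) ^ (k + m) = 2 ^ n := by rw [hn]
      rw [← h2n]
      exact mul_le_mul_of_nonneg_right hch (pow_nonneg hM0 _)
    -- Gamma lower bound
    set j : ℕ := Nat.floor ((n : ℝ) * μ) with hj
    have hnμ : (n : ℝ) * μ ≤ x := by
      have h1' : (k : ℝ) * μ ≤ (k : ℝ) * a :=
        mul_le_mul_of_nonneg_left (min_le_left a b) (Nat.cast_nonneg k)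
      have h2' : (m : ℝ) * μ ≤ (m : ℝ) * b :=
        mul_le_mul_of_nonneg_left (min_le_right a b) (Nat.cast_nonneg m)
      have : ((n : ℕ) : ℝ) = (k : ℝ) + (m : ℝ) := by rw [hn]; push_cast; ring
      rw [this, add_mul]
      linarith
    have hjx : ((j : ℝ) + 2) ≤ z + 3 := by
      have h1' : (j : ℝ) ≤ (n : ℝ) * μ := Nat.floor_le (by positivity)
      have : (n : ℝ) * μ ≤ z := le_trans hnμ (by rw [hz]; linarith)
      linarith
    have hΓmono : ((j + 1).factorial : ℝ) ≤ Real.Gamma (z + 3) := by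
      have e : Real.Gamma ((j : ℝ) + 2) = ((j + 1).factorial : ℝ) := by
        have := Real.Gamma_nat_eq_factorial (j + 1)
        have harg : (((j + 1 : ℕ) : ℝ) + 1) = (j : ℝ) + 2 := by push_cast; ring
        rwa [harg] at this
      rw [← e]
      have hmem1 : ((j : ℝ) + 2) ∈ Set.Ici (2 : ℝ) := by
        simp only [Set.mem_Ici]
        have : (0 : ℝ) ≤ (j : ℝ) := Nat.cast_nonneg j
        linarith
      have hmem2 : z + 3 ∈ Set.Ici (2 : ℝ) := by
        simp only [Set.mem_Ici]; linarith
      exact Real.Gamma_strictMonoOn_Ici.monotoneOn hmem1 hmem2 hjx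
    have hΓ3 : Real.Gamma (z + 3) = z * (z + 1) * (z + 2) * Real.Gamma z := by
      have e1 : Real.Gamma (z + 1) = z * Real.Gamma z := Real.Gamma_add_one hz0.ne'
      have e2 : Real.Gamma (z + 2) = (z + 1) * Real.Gamma (z + 1) := by
        rw [show z + 2 = (z + 1) + 1 by ring, Real.Gamma_add_one (by positivity)]
      have e3 : Real.Gamma (z + 3) = (z + 2) * Real.Gamma (z + 2) := by
        rw [show z + 3 = (z + 2) + 1 by ring, Real.Gamma_add_one (by positivity)]
      rw [e3, e2, e1]; ring
    have hΓinv : (Real.Gamma z)⁻¹ ≤ P n / ((j + 1).factorial : ℝ) := by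
      have hΓ3pos : 0 < Real.Gamma (z + 3) := Real.Gamma_pos_of_pos (by linarith)
      have hfactpos : (0 : ℝ) < ((j + 1).factorial : ℝ) := by
        exact_mod_cast Nat.factorial_pos _
      have einv : (Real.Gamma z)⁻¹ = z * (z + 1) * (z + 2) / Real.Gamma (z + 3) := by
        rw [hΓ3]
        field_simp
      rw [einv]
      have hznum : z ≤ (n : ℝ) * ν + c := by
        have h1' : (k : ℝ) * a ≤ (k : ℝ) * ν :=
          mul_le_mul_of_nonneg_left (le_max_left a b) (Nat.cast_nonneg k)
        have h2' : (m : ℝ) * b ≤ (m : ℝ) * ν :=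
          mul_le_mul_of_nonneg_left (le_max_right a b) (Nat.cast_nonneg m)
        have hcast : ((n : ℕ) : ℝ) = (k : ℝ) + (m : ℝ) := by rw [hn]; push_cast; ring
        rw [hz, hx, hcast, add_mul]
        linarith
      refine div_le_div₀ (hP0 n) ?_ hfactpos hΓmono
      show z * (z + 1) * (z + 2) ≤ P n
      have hw0 : (0 : ℝ) ≤ (n : ℝ) * ν + c := le_trans hz0.le hznum
      have step1 : z * (z + 1) ≤ ((n : ℝ) * ν + c) * ((n : ℝ) * ν + c + 1) :=
        mul_le_mul hznum (by linarith) (by linarith) hw0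
      exact mul_le_mul step1 (by linarith) (by linarith)
        (mul_nonneg hw0 (by linarith))
    -- combine
    rw [hFeq, div_eq_mul_inv]
    calc t ^ x * (Real.Gamma z)⁻¹ * ‖Q A B k m‖
        ≤ T ^ n * (P n / ((j + 1).factorial : ℝ)) * (2 ^ n * M ^ n) := by
          refine mul_le_mul ?_ h2 (norm_nonneg _) ?_
          · exact mul_le_mul h1 hΓinv (inv_nonneg.mpr hΓ.le) (by positivity)
          · have hPn := hP0 n
            have hfp : (0:ℝ) < ((j + 1).factorial : ℝ) := by
              exact_mod_cast Nat.factorial_pos _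
            positivity
    _ = Bb n := by
          simp only [hBdef, hRdef, hj]
          rw [mul_pow, mul_pow]
          ring
  -- summability of the dominating series on antidiagonals
  -- choose s with (s : ℝ) ^ μ ≥ 2 R
  obtain ⟨s, hs1, hs2⟩ : ∃ s : ℕ, 1 ≤ s ∧ 2 * R ≤ (s : ℝ) ^ μ := by
    refine ⟨max 1 (Nat.ceil ((2 * R) ^ μ⁻¹)), le_max_left _ _, ?_⟩
    have h2R : (0 : ℝ) ≤ 2 * R := by linarith
    have hcl : (2 * R) ^ μ⁻¹ ≤ ((max 1 (Nat.ceil ((2 * R) ^ μ⁻¹)) : ℕ) : ℝ) := by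
      calc (2 * R) ^ μ⁻¹ ≤ ((Nat.ceil ((2 * R) ^ μ⁻¹) : ℕ) : ℝ) := Nat.le_ceil _
      _ ≤ _ := by exact_mod_cast Nat.le_max_right 1 _
    calc 2 * R = ((2 * R) ^ μ⁻¹) ^ μ := (Real.rpow_inv_rpow h2R hμ.ne').symm
    _ ≤ ((max 1 (Nat.ceil ((2 * R) ^ μ⁻¹)) : ℕ) : ℝ) ^ μ :=
        Real.rpow_le_rpow (Real.rpow_nonneg h2R _) hcl hμ.le
  have hs0 : (1 : ℝ) ≤ (s : ℝ) := by exact_mod_cast hs1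
  have hsμpos : 0 < (s : ℝ) ^ μ := Real.rpow_pos_of_pos (by linarith) μ
  have hhalf : R / (s : ℝ) ^ μ ≤ 1 / 2 := by
    rw [div_le_div_iff₀ hsμpos (by norm_num)]
    linarith
  have hq0 : 0 ≤ R / (s : ℝ) ^ μ := by positivity
  -- the bound for the antidiagonal sums
  set G : ℕ → ℝ := fun n => ((n : ℝ) + 1) * Bb n with hGdef
  have hGsummable : Summable G := by
    have hss : (0 : ℝ) < (s : ℝ) ^ s := by positivity
    refine Summable.of_nonneg_of_le
      (fun n => by
        have := hBb0 n
        positivity)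
      (f := fun n : ℕ => (K ^ 3 * (s : ℝ) ^ s) * (((n : ℝ) + 1) ^ 4 * (1 / 2) ^ n))
      (fun n => ?_) (summable_aux.mul_left _)
    · -- G n ≤ K^3 s^s (n+1)^4 (1/2)^n
      set j : ℕ := Nat.floor ((n : ℝ) * μ) with hj
      have hfactpos : (0 : ℝ) < ((j + 1).factorial : ℝ) := by
        exact_mod_cast Nat.factorial_pos _
      -- factorial lower bound
      have hfact : ((s : ℝ) ^ μ) ^ n ≤ (s : ℝ) ^ s * ((j + 1).factorial : ℝ) := by
        have hnat : (s : ℕ) ^ (j + 1) ≤ s ^ s * (j + 1).factorial :=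
          pow_le_pow_mul_factorial s hs1 (j + 1)
        have hnat' : ((s : ℝ)) ^ (j + 1) ≤ (s : ℝ) ^ s * ((j + 1).factorial : ℝ) := by
          exact_mod_cast hnat
        refine le_trans ?_ hnat'
        have hexp : (n : ℝ) * μ ≤ ((j + 1 : ℕ) : ℝ) := by
          have := Nat.lt_floor_add_one ((n : ℝ) * μ)
          push_cast
          push_cast at this
          linarith
        calc ((s : ℝ) ^ μ) ^ n = (s : ℝ) ^ (μ * (n : ℝ)) := by
              rw [← Real.rpow_natCast ((s : ℝ) ^ μ) n, ← Real.rpow_mul (by linarith)]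
        _ ≤ (s : ℝ) ^ (((j + 1 : ℕ) : ℝ)) := by
              apply Real.rpow_le_rpow_of_exponent_le hs0
              linarith [hexp]
        _ = (s : ℝ) ^ (j + 1) := Real.rpow_natCast _ _
      have hBbn : Bb n ≤ R ^ n * P n * (s : ℝ) ^ s / ((s : ℝ) ^ μ) ^ n := by
        simp only [hBdef, ← hj]
        rw [div_le_div_iff₀ hfactpos (by positivity)]
        calc R ^ n * P n * ((s : ℝ) ^ μ) ^ n
            ≤ R ^ n * P n * ((s : ℝ) ^ s * ((j + 1).factorial : ℝ)) := by
              apply mul_le_mul_of_nonneg_left hfact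
              have := hP0 n
              positivity
        _ = R ^ n * P n * (s : ℝ) ^ s * ((j + 1).factorial : ℝ) := by ring
      have hPle : ((n : ℝ) + 1) * P n ≤ K ^ 3 * ((n : ℝ) + 1) ^ 4 := by
        have hf1 : (n : ℝ) * ν + c ≤ ((n : ℝ) + 1) * K := by
          simp only [hKdef]; nlinarith [hν.le, hc.le, (Nat.cast_nonneg n : (0:ℝ) ≤ (n:ℝ))]
        have hf2 : (n : ℝ) * ν + c + 1 ≤ ((n : ℝ) + 1) * K := by
          simp only [hKdef]; nlinarith [hν.le, hc.le, (Nat.cast_nonneg n : (0:ℝ) ≤ (n:ℝ))]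
        have hf3 : (n : ℝ) * ν + c + 2 ≤ ((n : ℝ) + 1) * K := by
          simp only [hKdef]; nlinarith [hν.le, hc.le, (Nat.cast_nonneg n : (0:ℝ) ≤ (n:ℝ))]
        have h01 : (0 : ℝ) ≤ (n : ℝ) * ν + c := by positivity
        have h02 : (0 : ℝ) ≤ (n : ℝ) * ν + c + 1 := by linarith
        have hn1 : (0 : ℝ) ≤ (n : ℝ) + 1 := by positivity
        have hprod : P n ≤ (((n : ℝ) + 1) * K) * ((((n : ℝ) + 1) * K) * (((n : ℝ) + 1) * K)) := by
          have hstep : ((n : ℝ) * ν + c) * ((n : ℝ) * ν + c + 1) * ((n : ℝ) * ν + c + 2)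
              ≤ (((n : ℝ) + 1) * K) * (((n : ℝ) + 1) * K) * (((n : ℝ) + 1) * K) :=
            mul_le_mul (mul_le_mul hf1 hf2 h02 (by positivity)) hf3
              (by linarith) (by positivity)
          calc P n = ((n : ℝ) * ν + c) * ((n : ℝ) * ν + c + 1) * ((n : ℝ) * ν + c + 2) := rfl
          _ ≤ (((n : ℝ) + 1) * K) * (((n : ℝ) + 1) * K) * (((n : ℝ) + 1) * K) := hstep
          _ = (((n : ℝ) + 1) * K) * ((((n : ℝ) + 1) * K) * (((n : ℝ) + 1) * K)) := by ring
        calc ((n : ℝ) + 1) * P n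
            ≤ ((n : ℝ) + 1) * ((((n : ℝ) + 1) * K) * ((((n : ℝ) + 1) * K) * (((n : ℝ) + 1) * K))) :=
              mul_le_mul_of_nonneg_left hprod hn1
        _ = K ^ 3 * ((n : ℝ) + 1) ^ 4 := by ring
      have hq : (R / (s : ℝ) ^ μ) ^ n ≤ (1 / 2) ^ n := pow_le_pow_left₀ hq0 hhalf n
      calc G n = ((n : ℝ) + 1) * Bb n := rfl
      _ ≤ ((n : ℝ) + 1) * (R ^ n * P n * (s : ℝ) ^ s / ((s : ℝ) ^ μ) ^ n) := by
            apply mul_le_mul_of_nonneg_left hBbn (by positivity)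
      _ = ((s : ℝ) ^ s * (((n : ℝ) + 1) * P n)) * (R / (s : ℝ) ^ μ) ^ n := by
            rw [div_pow]
            field_simp
      _ ≤ ((s : ℝ) ^ s * (K ^ 3 * ((n : ℝ) + 1) ^ 4)) * (1 / 2) ^ n := by
            refine mul_le_mul ?_ hq (by positivity) ?_
            · exact mul_le_mul_of_nonneg_left hPle (by positivity)
            · positivity
      _ = (K ^ 3 * (s : ℝ) ^ s) * (((n : ℝ) + 1) ^ 4 * (1 / 2) ^ n) := by ring
  -- package via antidiagonals
  rw [← Finset.HasAntidiagonal.sigmaAntidiagonalEquivProd.summable_iff]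
  refine (summable_sigma_of_nonneg (fun x => hF0 _)).mpr
    ⟨fun n => Summable.of_finite, ?_⟩
  · apply Summable.of_nonneg_of_le (fun n => tsum_nonneg fun _ => hF0 _) _ hGsummable
    intro n
    have heq : ∑' (y : (Finset.HasAntidiagonal.antidiagonal n : Finset (ℕ × ℕ))),
        F (Finset.HasAntidiagonal.sigmaAntidiagonalEquivProd ⟨n, y⟩) = ∑ p ∈ Finset.HasAntidiagonal.antidiagonal n, F p := by
      have : ∀ y : (Finset.HasAntidiagonal.antidiagonal n : Finset (ℕ × ℕ)),
          F (Finset.HasAntidiagonal.sigmaAntidiagonalEquivProd ⟨n, y⟩) = F (y : ℕ × ℕ) := fun y => rfl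
      rw [tsum_congr this]
      exact Finset.tsum_subtype _ F
    rw [heq]
    calc ∑ p ∈ Finset.HasAntidiagonal.antidiagonal n, F p ≤ ∑ p ∈ Finset.HasAntidiagonal.antidiagonal n, Bb n := by
          apply Finset.sum_le_sum
          intro p hp
          have hpn : p.1 + p.2 = n := Finset.HasAntidiagonal.mem_antidiagonal.mp hp
          have := key p
          rwa [hpn] at this
    _ = ((n + 1 : ℕ) : ℝ) * Bb n := by
          rw [Finset.sum_const, Finset.Nat.card_antidiagonal, nsmul_eq_mul]
    _ = G n := by push_cast; ring
end

section
/- Let α > 0, β > 0, γ ∈ ℝ, λ ∈ ℝ, and let s > 0 be a real number with |λ| < s^α. Then the Laplace transform of the three-parameter (Prabhakar) Mittag-Leffler function satisfies ∫₀^∞ e^{−st} t^{β−1} E_{α,β}^{γ}(λ t^{α}) dt = s^{−β} (1 − λ s^{−α})^{−γ}. -/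
open MeasureTheory

/-- The three-parameter (Prabhakar) Mittag-Leffler function
`E_{α,β}^{γ}(z) = ∑_{k=0}^∞ (γ)_k z^k / (k! Γ(kα+β))`. -/
noncomputable def prabhakarML (α β γ z : ℝ) : ℝ :=
  ∑' k : ℕ, (ascPochhammer ℝ k).eval γ * z ^ k / ((k.factorial : ℝ) * Real.Gamma (k * α + β))

open Metric

lemma mem_slit (z : ℂ) (hz : z ∈ Metric.ball (0:ℂ) 1) : 1 - z ∈ Complex.slitPlane := by
  rw [Complex.mem_slitPlane_iff]
  left
  have h1 : |z.re| ≤ ‖z‖ := Complex.abs_re_le_norm z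
  have h2 : ‖z‖ < 1 := by simpa using hz
  have := abs_le.mp h1
  simp only [Complex.sub_re, Complex.one_re]
  linarith

lemma iterDeriv_binom (g : ℂ) : ∀ n : ℕ, ∀ z ∈ Metric.ball (0:ℂ) 1,
    iteratedDeriv n (fun w : ℂ => (1 - w) ^ (-g)) z
      = (ascPochhammer ℂ n).eval g * (1 - z) ^ (-g - n) := by
  intro n
  induction n with
  | zero => intro z hz; simp
  | succ n ih =>
    intro z hz
    rw [iteratedDeriv_succ]
    have hev : (iteratedDeriv n (fun w : ℂ => (1 - w) ^ (-g)))
        =ᶠ[nhds z] fun w => (ascPochhammer ℂ n).eval g * (1 - w) ^ (-g - n) :=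
      Filter.eventuallyEq_of_mem (Metric.isOpen_ball.mem_nhds hz) ih
    rw [hev.deriv_eq]
    have h1 : HasDerivAt (fun w : ℂ => 1 - w) (-1) z := (hasDerivAt_id z).const_sub 1
    have h2 := (HasDerivAt.cpow_const (c := -g - n) h1 (mem_slit z hz)).const_mul ((ascPochhammer ℂ n).eval g)
    rw [h2.deriv]
    have he : -g - (n+1 : ℕ) = -g - n - 1 := by push_cast; ring
    rw [ascPochhammer_succ_right, Polynomial.eval_mul, Polynomial.eval_add, Polynomial.eval_X,
      Polynomial.eval_natCast, he]
    ring

lemma hasSum_binom_complex (g z : ℂ) (hz : ‖z‖ < 1) :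
    HasSum (fun n : ℕ => (ascPochhammer ℂ n).eval g * z ^ n / (n.factorial : ℂ))
      ((1 - z) ^ (-g)) := by
  have hd : DifferentiableOn ℂ (fun w : ℂ => (1 - w) ^ (-g)) (Metric.ball 0 1) := by
    intro w hw
    exact ((HasDerivAt.cpow_const (c := -g) ((hasDerivAt_id w).const_sub 1)
      (mem_slit w hw)).differentiableAt).differentiableWithinAt
  have H := Complex.hasSum_taylorSeries_on_ball hd (mem_ball_zero_iff.mpr hz)
  have : (fun n : ℕ => (ascPochhammer ℂ n).eval g * z ^ n / (n.factorial : ℂ))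
      = fun n : ℕ => (n.factorial : ℂ)⁻¹ • (z - 0) ^ n •
          iteratedDeriv n (fun w : ℂ => (1 - w) ^ (-g)) 0 := by
    funext n
    rw [iterDeriv_binom g n 0 (by simp), smul_eq_mul, smul_eq_mul]
    simp only [sub_zero, Complex.one_cpow]
    field_simp
  rw [this]
  simpa using H

lemma hasSum_binom_real (g x : ℝ) (hx : |x| < 1) :
    HasSum (fun n : ℕ => (ascPochhammer ℝ n).eval g * x ^ n / (n.factorial : ℝ))
      ((1 - x) ^ (-g)) := by
  have h1 : (0:ℝ) ≤ 1 - x := by have := abs_lt.mp hx; linarith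
  have H := hasSum_binom_complex g x (by simpa using hx)
  rw [← Complex.hasSum_ofReal]
  convert H using 1
  · funext n
    have hev : (((ascPochhammer ℝ n).eval g : ℝ) : ℂ) = (ascPochhammer ℂ n).eval (g:ℂ) := by
      rw [← ascPochhammer_map (algebraMap ℝ ℂ) n, Polynomial.eval_map]
      exact (Polynomial.eval₂_at_apply (algebraMap ℝ ℂ) g).symm
    rw [Complex.ofReal_div, Complex.ofReal_mul, hev]
    push_cast
    ring
  · rw [Complex.ofReal_cpow h1]
    push_cast
    ring_nf

lemma pochhammer_abs_nonneg (g : ℝ) (n : ℕ) : 0 ≤ (ascPochhammer ℝ n).eval |g| := by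
  induction n with
  | zero => simp
  | succ n ih =>
    rw [ascPochhammer_succ_right, Polynomial.eval_mul, Polynomial.eval_add, Polynomial.eval_X,
      Polynomial.eval_natCast]
    exact mul_nonneg ih (by positivity)

lemma pochhammer_abs_le (g : ℝ) (n : ℕ) :
    |(ascPochhammer ℝ n).eval g| ≤ (ascPochhammer ℝ n).eval |g| := by
  induction n with
  | zero => simp
  | succ n ih =>
    simp only [ascPochhammer_succ_right, Polynomial.eval_mul, Polynomial.eval_add,
      Polynomial.eval_X, Polynomial.eval_natCast, abs_mul]
    refine mul_le_mul ih ?_ (abs_nonneg _) (pochhammer_abs_nonneg g n)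
    calc |g + (n:ℝ)| ≤ |g| + |(n:ℝ)| := abs_add_le g n
      _ = |g| + n := by rw [Nat.abs_cast n]

lemma laplace_term_eq (α β s c lam : ℝ) (k : ℕ) {t : ℝ} (ht : 0 < t) :
    Real.exp (-(s*t)) * t ^ (β-1) *
        (c * (lam * t ^ α) ^ k / ((k.factorial:ℝ) * Real.Gamma (k*α+β)))
      = (c * lam ^ k / ((k.factorial:ℝ) * Real.Gamma (k*α+β))) *
          (t ^ ((k:ℝ)*α+β-1) * Real.exp (-(s*t))) := by
  have h1 : (t ^ α) ^ k = t ^ (α * (k:ℝ)) := by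
    rw [← Real.rpow_natCast (t ^ α) k, ← Real.rpow_mul ht.le]
  have h2 : t ^ (β - 1) * t ^ (α * (k:ℝ)) = t ^ ((k:ℝ)*α+β-1) := by
    rw [← Real.rpow_add ht]; ring_nf
  rw [mul_pow, h1, ← h2]; ring

lemma laplace_term_value (α β s : ℝ) (hα : 0 < α) (hβ : 0 < β) (hs : 0 < s) (c lam : ℝ)
    (k : ℕ) :
    ∫ t in Set.Ioi (0:ℝ), Real.exp (-(s*t)) * t ^ (β-1) *
        (c * (lam * t ^ α) ^ k / ((k.factorial:ℝ) * Real.Gamma (k*α+β)))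
      = s ^ (-β) * (c * (lam * s ^ (-α)) ^ k / (k.factorial:ℝ)) := by
  have ha : 0 < (k:ℝ)*α+β := by positivity
  rw [MeasureTheory.setIntegral_congr_fun measurableSet_Ioi
      (fun t ht => laplace_term_eq α β s c lam k ht),
    MeasureTheory.integral_const_mul, Real.integral_rpow_mul_exp_neg_mul_Ioi ha hs]
  have h3 : (1/s) ^ ((k:ℝ)*α+β) = (s ^ (-α)) ^ k * s ^ (-β) := by
    rw [one_div, ← Real.rpow_neg_one s, ← Real.rpow_natCast (s ^ (-α)) k,
      ← Real.rpow_mul hs.le, ← Real.rpow_mul hs.le, ← Real.rpow_add hs]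
    congr 1; ring
  rw [h3, mul_pow]
  have hΓ : Real.Gamma ((k:ℝ)*α+β) ≠ 0 := (Real.Gamma_pos_of_pos ha).ne'
  have hfac : ((k.factorial:ℝ)) ≠ 0 := Nat.cast_ne_zero.mpr k.factorial_ne_zero
  field_simp

lemma laplace_term_integrable (α β s : ℝ) (hα : 0 < α) (hβ : 0 < β) (hs : 0 < s) (c lam : ℝ)
    (k : ℕ) :
    MeasureTheory.IntegrableOn (fun t : ℝ => Real.exp (-(s*t)) * t ^ (β-1) *
        (c * (lam * t ^ α) ^ k / ((k.factorial:ℝ) * Real.Gamma (k*α+β)))) (Set.Ioi 0) := by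
  have ha : 0 < (k:ℝ)*α+β := by positivity
  have base := integrableOn_rpow_mul_exp_neg_mul_rpow (s := (k:ℝ)*α+β-1) (by linarith)
    zero_lt_one hs
  have base2 : MeasureTheory.IntegrableOn
      (fun t : ℝ => t ^ ((k:ℝ)*α+β-1) * Real.exp (-(s*t))) (Set.Ioi 0) := by
    refine base.congr_fun (fun t ht => ?_) measurableSet_Ioi
    simp only [Real.rpow_one]
    ring_nf
  have hC : MeasureTheory.IntegrableOn
      (fun t : ℝ => (c * lam ^ k / ((k.factorial:ℝ) * Real.Gamma ((k:ℝ)*α+β))) *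
        (t ^ ((k:ℝ)*α+β-1) * Real.exp (-(s*t)))) (Set.Ioi 0) :=
    base2.const_mul _
  exact hC.congr_fun (fun t ht => (laplace_term_eq α β s c lam k ht).symm) measurableSet_Ioi

lemma laplace_term_norm (α β s c lam : ℝ) (hβ : 0 < β) (k : ℕ)
    (hΓpos : 0 < Real.Gamma ((k:ℝ)*α+β)) {t : ℝ} (ht : 0 < t) :
    ‖Real.exp (-(s*t)) * t ^ (β-1) *
        (c * (lam * t ^ α) ^ k / ((k.factorial:ℝ) * Real.Gamma (k*α+β)))‖
      = Real.exp (-(s*t)) * t ^ (β-1) *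
        (|c| * (|lam| * t ^ α) ^ k / ((k.factorial:ℝ) * Real.Gamma (k*α+β))) := by
  have h1 : (0:ℝ) < t ^ α := Real.rpow_pos_of_pos ht α
  rw [Real.norm_eq_abs, abs_mul, abs_mul, abs_div, abs_mul, abs_pow, abs_mul, abs_mul,
    abs_of_pos (Real.exp_pos _), abs_of_pos (Real.rpow_pos_of_pos ht _),
    abs_of_pos h1, abs_of_pos hΓpos, Nat.abs_cast _]

/-- Laplace transform of the three-parameter Mittag-Leffler function:
`∫₀^∞ e^{−st} t^{β−1} E_{α,β}^{γ}(λ t^α) dt = s^{−β} (1 − λ s^{−α})^{−γ}`. -/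
theorem laplace_prabhakarML (α β γ lam s : ℝ) (hα : 0 < α) (hβ : 0 < β) (hs : 0 < s)
    (hlam : |lam| < s ^ α) :
    ∫ t in Set.Ioi (0 : ℝ), Real.exp (-(s * t)) * t ^ (β - 1) * prabhakarML α β γ (lam * t ^ α)
      = s ^ (-β) * (1 - lam * s ^ (-α)) ^ (-γ) := by
  have hsα : (0:ℝ) < s ^ α := Real.rpow_pos_of_pos hs α
  have hsnegα : (0:ℝ) < s ^ (-α) := Real.rpow_pos_of_pos hs _
  have hsnegβ : (0:ℝ) < s ^ (-β) := Real.rpow_pos_of_pos hs _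
  set x : ℝ := lam * s ^ (-α) with hxdef
  have hxabs : |x| < 1 := by
    rw [hxdef, abs_mul, abs_of_pos hsnegα, Real.rpow_neg hs.le, ← div_eq_mul_inv,
      div_lt_one hsα]
    exact hlam
  have binom := hasSum_binom_real γ x hxabs
  have binomAbs := hasSum_binom_real |γ| |x| (by rwa [abs_abs])
  set F : ℕ → ℝ → ℝ := fun k t => Real.exp (-(s*t)) * t ^ (β-1) *
    ((ascPochhammer ℝ k).eval γ * (lam * t ^ α) ^ k /
      ((k.factorial:ℝ) * Real.Gamma (k*α+β))) with hF
  have hF_int : ∀ k, Integrable (F k) (volume.restrict (Set.Ioi 0)) :=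
    fun k => laplace_term_integrable α β s hα hβ hs _ lam k
  have hΓpos : ∀ k : ℕ, 0 < Real.Gamma ((k:ℝ)*α+β) :=
    fun k => Real.Gamma_pos_of_pos (by positivity)
  have hxabs' : |lam| * s ^ (-α) = |x| := by rw [hxdef, abs_mul, abs_of_pos hsnegα]
  have hnorm : ∀ k, (∫ t in Set.Ioi (0:ℝ), ‖F k t‖) =
      s ^ (-β) * (|(ascPochhammer ℝ k).eval γ| * |x| ^ k / (k.factorial:ℝ)) := by
    intro k
    rw [MeasureTheory.setIntegral_congr_fun measurableSet_Ioi
        (fun t ht => laplace_term_norm α β s _ lam hβ k (hΓpos k) ht),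
      laplace_term_value α β s hα hβ hs _ |lam| k, hxabs']
  have hF_sum : Summable (fun k => ∫ t in Set.Ioi (0:ℝ), ‖F k t‖) := by
    rw [funext hnorm]
    refine Summable.of_nonneg_of_le (fun k => ?_) (fun k => ?_)
      (binomAbs.summable.mul_left (s ^ (-β)))
    · exact mul_nonneg hsnegβ.le (by positivity)
    · have h := pochhammer_abs_le γ k
      gcongr
  calc ∫ t in Set.Ioi (0:ℝ), Real.exp (-(s*t)) * t ^ (β-1) * prabhakarML α β γ (lam * t ^ α)
      = ∫ t in Set.Ioi (0:ℝ), ∑' k, F k t := by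
        refine MeasureTheory.setIntegral_congr_fun measurableSet_Ioi (fun t ht => ?_)
        rw [prabhakarML, ← tsum_mul_left]
    _ = ∑' k, ∫ t in Set.Ioi (0:ℝ), F k t :=
        (MeasureTheory.integral_tsum_of_summable_integral_norm hF_int hF_sum).symm
    _ = ∑' k, s ^ (-β) * ((ascPochhammer ℝ k).eval γ * x ^ k / (k.factorial:ℝ)) :=
        tsum_congr (fun k => laplace_term_value α β s hα hβ hs _ lam k)
    _ = s ^ (-β) * ∑' k, ((ascPochhammer ℝ k).eval γ * x ^ k / (k.factorial:ℝ)) :=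
        tsum_mul_left
    _ = s ^ (-β) * (1 - x) ^ (-γ) := by rw [binom.tsum_eq]
end

section
/- Let A, B be elements of a Banach algebra, let ρ > 0, a > 0, b > 0 be real, and let t > 0. Then ∫₀ᵗ (t−s)^{a−1} E_{ρ,a}(A(t−s)^{ρ}) · B · s^{b−1} E_{ρ,b}(A s^{ρ}) ds = ∑_{k=0}^∞ ( ∑_{l=0}^{k} A^{k−l} B A^{l} ) · t^{kρ+a+b−1} / Γ(kρ+a+b), where the integral is a Bochner integral. -/
open MeasureTheory

/-- The two-parameter Mittag-Leffler function of a Banach-algebra element: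
`E_{a,c}(T) = ∑_{k=0}^∞ T^k / Γ(ka+c)`. -/
noncomputable def mlTwo {𝔸 : Type*} [NormedRing 𝔸] [NormedAlgebra ℝ 𝔸] (a c : ℝ) (T : 𝔸) : 𝔸 :=
  ∑' k : ℕ, (Real.Gamma ((k : ℝ) * a + c))⁻¹ • T ^ k

private lemma fact_ge_pow (m : ℕ) : ∀ j : ℕ, m ≤ j → (m:ℝ)^(j - m) ≤ (Nat.factorial j : ℝ) := by
  intro j hj
  induction j, hj using Nat.le_induction with
  | base =>
      simp only [Nat.sub_self, pow_zero]
      exact_mod_cast Nat.one_le_iff_ne_zero.2 (Nat.factorial_pos m).ne'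
  | succ j hj ih =>
      have h1 : j + 1 - m = (j - m) + 1 := by omega
      rw [h1, pow_succ, Nat.factorial_succ]
      push_cast
      have hmj : (m:ℝ) ≤ (j:ℝ) + 1 := by
        have h2 : m ≤ j + 1 := by omega
        exact_mod_cast h2
      have h0 : (0:ℝ) ≤ (m:ℝ)^(j-m) := by positivity
      have hfj : (0:ℝ) ≤ (Nat.factorial j : ℝ) := by positivity
      nlinarith [ih, hfj, hmj, h0]

private lemma gamma_lower (m : ℕ) (hm : 1 ≤ m) {x : ℝ} (hx : (m:ℝ) + 3 ≤ x) :
    (m:ℝ) ^ (x - ((m:ℝ)+2)) ≤ Real.Gamma x := by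
  have hm1 : (1:ℝ) ≤ (m:ℝ) := by exact_mod_cast hm
  have hx0 : (0:ℝ) ≤ x := by linarith
  set n := ⌊x⌋₊ with hn
  have hn_le : (n:ℝ) ≤ x := Nat.floor_le hx0
  have hx_lt : x < n + 1 := Nat.lt_floor_add_one x
  have hmn : m + 3 ≤ n := by
    have := Nat.le_floor (α := ℝ) (n := m + 3) (show ((m+3:ℕ):ℝ) ≤ x by push_cast; linarith)
    simpa using this
  have h2n : (2:ℝ) ≤ (n:ℝ) := by
    have : (2:ℕ) ≤ n := by omega
    exact_mod_cast this
  have hΓmono : Real.Gamma (n:ℝ) ≤ Real.Gamma x := by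
    rcases eq_or_lt_of_le hn_le with h | h
    · rw [h]
    · exact (Real.Gamma_strictMonoOn_Ici (by simpa using h2n)
        (by simp only [Set.mem_Ici]; linarith) h).le
  have h1n : 1 ≤ n := by omega
  have hΓn : Real.Gamma (n:ℝ) = (Nat.factorial (n-1) : ℝ) := by
    rw [← Real.Gamma_nat_eq_factorial (n-1)]
    congr 1
    have : ((n-1:ℕ):ℝ) = (n:ℝ) - 1 := by
      rw [Nat.cast_sub h1n]; norm_num
    rw [this]; ring
  have hfact : (m:ℝ) ^ ((n-1-m : ℕ)) ≤ (Nat.factorial (n-1) : ℝ) := fact_ge_pow m (n-1) (by omega)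
  have hcast : ((n-1-m : ℕ):ℝ) = (n:ℝ) - 1 - m := by
    rw [Nat.cast_sub (by omega : m ≤ n - 1), Nat.cast_sub h1n]; norm_num
  have hexp : x - ((m:ℝ)+2) ≤ ((n-1-m : ℕ):ℝ) := by rw [hcast]; linarith
  calc (m:ℝ)^(x-((m:ℝ)+2)) ≤ (m:ℝ)^(((n-1-m:ℕ)):ℝ) :=
        Real.rpow_le_rpow_of_exponent_le hm1 hexp
    _ = (m:ℝ)^((n-1-m : ℕ)) := Real.rpow_natCast _ _
    _ ≤ (Nat.factorial (n-1) : ℝ) := hfact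
    _ = Real.Gamma (n:ℝ) := hΓn.symm
    _ ≤ Real.Gamma x := hΓmono

private lemma summable_pow_div_gamma {ρ c : ℝ} (hρ : 0 < ρ) (hc : 0 < c) {C : ℝ} (hC : 0 ≤ C) :
    Summable (fun k : ℕ => C ^ k / Real.Gamma ((k:ℝ) * ρ + c)) := by
  have hΓpos : ∀ k : ℕ, 0 < Real.Gamma ((k:ℝ)*ρ+c) := fun k => Real.Gamma_pos_of_pos (by positivity)
  set C1 := C + 1 with hC1
  have hC1_1 : (1:ℝ) ≤ C1 := by simp only [hC1]; linarith
  obtain ⟨m, hm⟩ := exists_nat_ge ((2*C1)^(1/ρ))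
  have h2C1 : (0:ℝ) < 2*C1 := by linarith
  have hm1 : 1 ≤ m := by
    rcases Nat.eq_zero_or_pos m with h | h
    · exfalso
      have hp : (0:ℝ) < (2*C1)^(1/ρ) := Real.rpow_pos_of_pos h2C1 _
      have h0 : (2*C1)^(1/ρ) ≤ 0 := by rw [h] at hm; exact_mod_cast hm
      linarith
    · exact h
  have hmpos : (0:ℝ) < (m:ℝ) := by exact_mod_cast hm1
  have hm1' : (1:ℝ) ≤ (m:ℝ) := by exact_mod_cast hm1
  have hmρ : 2*C1 ≤ (m:ℝ)^ρ := by
    calc 2*C1 = ((2*C1)^(1/ρ))^ρ := by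
          rw [← Real.rpow_mul h2C1.le, one_div, inv_mul_cancel₀ hρ.ne', Real.rpow_one]
      _ ≤ (m:ℝ)^ρ := Real.rpow_le_rpow (Real.rpow_nonneg h2C1.le _) hm hρ.le
  have hmρpos : (0:ℝ) < (m:ℝ)^ρ := Real.rpow_pos_of_pos hmpos _
  obtain ⟨K, hK⟩ := exists_nat_ge (((m:ℝ)+3)/ρ)
  apply (summable_nat_add_iff K).1
  set Q := (m:ℝ)^(c-((m:ℝ)+2)) with hQ
  have hQpos : 0 < Q := Real.rpow_pos_of_pos hmpos _
  have hbound : ∀ k : ℕ, C^(k+K)/Real.Gamma (((k+K:ℕ):ℝ)*ρ+c) ≤ Q⁻¹ * (1/2)^k := by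
    intro k
    set N := k + K with hN
    set x := ((N:ℕ):ℝ)*ρ+c with hx
    have hKN : ((m:ℝ)+3)/ρ ≤ (N:ℝ) := le_trans hK (by exact_mod_cast Nat.le_add_left K k)
    have hxge : (m:ℝ) + 3 ≤ x := by
      have : (m:ℝ)+3 ≤ (N:ℝ)*ρ := by
        rw [← div_le_iff₀ hρ]
        exact hKN
      simp only [hx]; linarith
    have hΓ := gamma_lower m hm1 hxge
    have hmx : (0:ℝ) < (m:ℝ)^(x-((m:ℝ)+2)) := Real.rpow_pos_of_pos hmpos _
    have step1 : C^N/Real.Gamma x ≤ C1^N / (m:ℝ)^(x-((m:ℝ)+2)) :=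
      div_le_div₀ (by positivity) (pow_le_pow_left₀ hC (by simp only [hC1]; linarith) N) hmx hΓ
    have e1 : (m:ℝ)^(x-((m:ℝ)+2)) = ((m:ℝ)^ρ)^N * Q := by
      rw [show x - ((m:ℝ)+2) = (N:ℝ)*ρ + (c-((m:ℝ)+2)) by simp only [hx]; ring,
        Real.rpow_add hmpos, mul_comm (N:ℝ) ρ, Real.rpow_mul hmpos.le, Real.rpow_natCast]
    have e2 : C1^N / (m:ℝ)^(x-((m:ℝ)+2)) = (C1/(m:ℝ)^ρ)^N * Q⁻¹ := by
      rw [e1, div_pow, div_mul_eq_div_div, div_eq_mul_inv]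
    have hhalf : C1/(m:ℝ)^ρ ≤ 1/2 := by
      rw [div_le_div_iff₀ hmρpos (by norm_num)]; linarith
    have step2 : (C1/(m:ℝ)^ρ)^N ≤ (1/2:ℝ)^N := pow_le_pow_left₀ (by positivity) hhalf N
    have step3 : (1/2:ℝ)^N ≤ (1/2:ℝ)^k := by
      apply pow_le_pow_of_le_one (by norm_num) (by norm_num)
      omega
    calc C^N/Real.Gamma x ≤ (C1/(m:ℝ)^ρ)^N * Q⁻¹ := by rw [← e2]; exact step1
      _ ≤ (1/2:ℝ)^k * Q⁻¹ := by
          apply mul_le_mul_of_nonneg_right (step2.trans step3) (by positivity)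
      _ = Q⁻¹ * (1/2)^k := by ring
  apply Summable.of_nonneg_of_le (fun k => by positivity) hbound
  exact (summable_geometric_of_lt_one (by norm_num) (by norm_num)).mul_left _

private lemma summable_succ_pow_div_gamma {ρ c : ℝ} (hρ : 0 < ρ) (hc : 0 < c) {C : ℝ}
    (hC : 0 ≤ C) :
    Summable (fun k : ℕ => ((k:ℝ)+1) * C^k / Real.Gamma ((k:ℝ)*ρ+c)) := by
  have hΓpos : ∀ k : ℕ, 0 < Real.Gamma ((k:ℝ)*ρ+c) := fun k => Real.Gamma_pos_of_pos (by positivity)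
  refine Summable.of_nonneg_of_le (fun k => by positivity) (fun k => ?_)
    (summable_pow_div_gamma hρ hc (by linarith : (0:ℝ) ≤ 2*(C+1)))
  · apply div_le_div₀ (by positivity) ?_ (hΓpos k) le_rfl
    have h1 : (k:ℝ)+1 ≤ 2^k := by
      have h2 : k + 1 ≤ 2^k := Nat.lt_two_pow_self
      exact_mod_cast h2
    have h2 : C^k ≤ (C+1)^k := pow_le_pow_left₀ hC (by linarith) k
    calc ((k:ℝ)+1) * C^k ≤ 2^k * (C+1)^k := by
          apply mul_le_mul h1 h2 (by positivity) (by positivity)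
      _ = (2*(C+1))^k := (mul_pow _ _ _).symm

private lemma beta_intervalIntegrable {p q t : ℝ} (hp : 0 < p) (hq : 0 < q) (ht : 0 < t) :
    IntervalIntegrable (fun s => (t-s)^(q-1) * s^(p-1)) volume 0 t := by
  have ht2 : (0:ℝ) < t/2 := by linarith
  have h1 : IntervalIntegrable (fun s => (t-s)^(q-1) * s^(p-1)) volume 0 (t/2) := by
    have base : IntervalIntegrable (fun s : ℝ => s^(p-1)) volume 0 (t/2) :=
      intervalIntegral.intervalIntegrable_rpow' (by linarith)
    apply base.continuousOn_mul
    rw [Set.uIcc_of_le ht2.le]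
    apply ContinuousOn.rpow_const
    · exact (continuous_const.sub continuous_id).continuousOn
    · intro x hx
      left
      have : x ≤ t/2 := hx.2
      have : 0 < t - x := by linarith
      exact this.ne'
  have h2 : IntervalIntegrable (fun s => (t-s)^(q-1) * s^(p-1)) volume (t/2) t := by
    have base : IntervalIntegrable (fun s : ℝ => s^(q-1)) volume 0 (t/2) :=
      intervalIntegral.intervalIntegrable_rpow' (by linarith)
    have base2 := (base.comp_sub_left t).symm
    have hig : IntervalIntegrable (fun x : ℝ => (t-x)^(q-1)) volume (t/2) t := by
      have e1 : t - t/2 = t/2 := by ring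
      have e2 : t - 0 = t := by ring
      rw [e1, e2] at base2
      exact base2
    apply hig.mul_continuousOn
    rw [Set.uIcc_of_le (by linarith : t/2 ≤ t)]
    apply ContinuousOn.rpow_const continuous_id.continuousOn
    intro x hx
    left
    have : t/2 ≤ x := hx.1
    exact (lt_of_lt_of_le ht2 this).ne'
  exact h1.trans h2

private lemma beta_integrableOn {p q t : ℝ} (hp : 0 < p) (hq : 0 < q) (ht : 0 < t) :
    IntegrableOn (fun s => (t-s)^(q-1) * s^(p-1)) (Set.Ioo 0 t) volume := by
  have h := (intervalIntegrable_iff.1 (beta_intervalIntegrable hp hq ht))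
  rw [Set.uIoc_of_le ht.le] at h
  exact h.mono_set Set.Ioo_subset_Ioc_self

private lemma beta_value {p q t : ℝ} (hp : 0 < p) (hq : 0 < q) (ht : 0 < t) :
    ∫ s in (0:ℝ)..t, (t-s)^(q-1) * s^(p-1)
      = Real.Gamma q * Real.Gamma p / Real.Gamma (q+p) * t^(q+p-1) := by
  have hpq : (0:ℝ) < q + p := by linarith
  have hΓqp : Complex.Gamma ((q:ℂ) + (p:ℂ)) ≠ 0 := by
    apply Complex.Gamma_ne_zero_of_re_pos
    simp only [Complex.add_re, Complex.ofReal_re]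
    linarith
  have h1 : ((∫ s in (0:ℝ)..t, (t-s)^(q-1) * s^(p-1) : ℝ) : ℂ)
      = ∫ s in (0:ℝ)..t, (s:ℂ)^((p:ℂ)-1) * ((t:ℂ)-(s:ℂ))^((q:ℂ)-1) := by
    rw [← intervalIntegral.integral_ofReal]
    apply intervalIntegral.integral_congr
    intro x hx
    dsimp only
    rw [Set.uIcc_of_le ht.le] at hx
    have hx0 : (0:ℝ) ≤ x := hx.1
    have hxt : (0:ℝ) ≤ t - x := by linarith [hx.2]
    rw [Complex.ofReal_mul, Complex.ofReal_cpow hx0, Complex.ofReal_cpow hxt]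
    push_cast
    ring
  have h2 := Complex.betaIntegral_scaled (p:ℂ) (q:ℂ) ht
  have h3 := Complex.Gamma_mul_Gamma_eq_betaIntegral
    (show 0 < (p:ℂ).re by simpa using hp) (show 0 < (q:ℂ).re by simpa using hq)
  have hbeta : Complex.betaIntegral (p:ℂ) (q:ℂ)
      = Complex.Gamma (p:ℂ) * Complex.Gamma (q:ℂ) / Complex.Gamma ((p:ℂ)+(q:ℂ)) := by
    rw [eq_div_iff (by rw [add_comm]; exact hΓqp)]
    rw [h3]; ring
  have h4 : ((∫ s in (0:ℝ)..t, (t-s)^(q-1) * s^(p-1) : ℝ) : ℂ)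
      = ((Real.Gamma q * Real.Gamma p / Real.Gamma (q+p) * t^(q+p-1) : ℝ) : ℂ) := by
    rw [h1, h2, hbeta,
      show (p:ℂ)+(q:ℂ)-1 = ((q+p-1 : ℝ):ℂ) by push_cast; ring,
      ← Complex.ofReal_cpow ht.le]
    simp only [show (p:ℂ)+(q:ℂ) = ((q+p:ℝ):ℂ) by push_cast; ring, Complex.Gamma_ofReal]
    push_cast
    ring
  exact_mod_cast h4

private lemma beta_Ioo {p q t : ℝ} (hp : 0 < p) (hq : 0 < q) (ht : 0 < t) :
    ∫ s in Set.Ioo (0:ℝ) t, (t-s)^(q-1) * s^(p-1)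
      = Real.Gamma q * Real.Gamma p / Real.Gamma (q+p) * t^(q+p-1) := by
  rw [← MeasureTheory.integral_Ioc_eq_integral_Ioo, ← intervalIntegral.integral_of_le ht.le]
  exact beta_value hp hq ht

private lemma norm_pow_le_one_add {𝔸 : Type*} [NormedRing 𝔸] (X : 𝔸) (m : ℕ) :
    ‖X^m‖ ≤ (‖(1:𝔸)‖+1) * ‖X‖^m := by
  cases m with
  | zero => simp only [pow_zero, mul_one]; linarith
  | succ n =>
      calc ‖X^(n+1)‖ ≤ ‖X‖^(n+1) := norm_pow_le' X n.succ_pos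
        _ ≤ (‖(1:𝔸)‖+1) * ‖X‖^(n+1) := by
            apply le_mul_of_one_le_left (by positivity)
            linarith [norm_nonneg (1:𝔸)]

private lemma ml_summable_norm {𝔸 : Type*} [NormedRing 𝔸] [NormedAlgebra ℝ 𝔸] (A : 𝔸)
    {ρ c : ℝ} (hρ : 0 < ρ) (hc : 0 < c) {u : ℝ} (hu : 0 ≤ u) :
    Summable (fun m : ℕ => ‖((Real.Gamma ((m:ℝ)*ρ+c))⁻¹ * u^((m:ℝ)*ρ)) • A^m‖) := by
  have hΓpos : ∀ k : ℕ, 0 < Real.Gamma ((k:ℝ)*ρ+c) := fun k => Real.Gamma_pos_of_pos (by positivity)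
  refine Summable.of_nonneg_of_le (fun m => norm_nonneg _) (fun m => ?_)
    (((summable_pow_div_gamma hρ hc (by positivity : (0:ℝ) ≤ u^ρ * ‖A‖)).mul_left
      (‖(1:𝔸)‖+1)))
  have hupow : u^((m:ℝ)*ρ) = (u^ρ)^m := by
    rw [mul_comm, Real.rpow_mul hu, Real.rpow_natCast]
  rw [norm_smul, Real.norm_eq_abs, abs_of_nonneg (by positivity)]
  calc (Real.Gamma ((m:ℝ)*ρ+c))⁻¹ * u^((m:ℝ)*ρ) * ‖A^m‖
      ≤ (Real.Gamma ((m:ℝ)*ρ+c))⁻¹ * u^((m:ℝ)*ρ) * ((‖(1:𝔸)‖+1) * ‖A‖^m) := by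
        apply mul_le_mul_of_nonneg_left (norm_pow_le_one_add A m) (by positivity)
    _ = (‖(1:𝔸)‖+1) * ((u^ρ*‖A‖)^m / Real.Gamma ((m:ℝ)*ρ+c)) := by
        rw [hupow, mul_pow, div_eq_mul_inv]
        ring

private lemma ml_eq {𝔸 : Type*} [NormedRing 𝔸] [NormedAlgebra ℝ 𝔸] (A : 𝔸)
    (ρ c : ℝ) {u : ℝ} (hu : 0 ≤ u) :
    mlTwo ρ c (u^ρ • A) = ∑' m : ℕ, ((Real.Gamma ((m:ℝ)*ρ+c))⁻¹ * u^((m:ℝ)*ρ)) • A^m := by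
  unfold mlTwo
  refine tsum_congr fun k => ?_
  rw [smul_pow, smul_smul, ← Real.rpow_natCast (u^ρ) k, ← Real.rpow_mul hu, mul_comm ρ (k:ℝ)]

set_option maxHeartbeats 2000000 in
/-- The convolution integral of two two-parameter Mittag-Leffler operator functions separated
by `B` equals the series `∑_k (∑_{l=0}^k A^{k−l} B A^l) t^{kρ+a+b−1} / Γ(kρ+a+b)`. -/
theorem mlTwo_convolution {𝔸 : Type*} [NormedRing 𝔸] [NormedAlgebra ℝ 𝔸] [CompleteSpace 𝔸]
    (A B : 𝔸) (ρ a b : ℝ) (hρ : 0 < ρ) (ha : 0 < a) (hb : 0 < b) (t : ℝ) (ht : 0 < t) :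
    ∫ s in (0:ℝ)..t, ((t - s) ^ (a - 1) * s ^ (b - 1)) •
        (mlTwo ρ a (((t - s) ^ ρ) • A) * B * mlTwo ρ b ((s ^ ρ) • A))
      = ∑' k : ℕ, (t ^ ((k : ℝ) * ρ + a + b - 1) / Real.Gamma ((k : ℝ) * ρ + a + b)) •
          (∑ l ∈ Finset.range (k + 1), A ^ (k - l) * B * A ^ l) := by
  have hΓa : ∀ m : ℕ, 0 < Real.Gamma ((m:ℝ)*ρ + a) := fun m => Real.Gamma_pos_of_pos (by positivity)
  have hΓb : ∀ n : ℕ, 0 < Real.Gamma ((n:ℝ)*ρ + b) := fun n => Real.Gamma_pos_of_pos (by positivity)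
  have hΓe : ∀ p : ℕ × ℕ, 0 < Real.Gamma (((p.1:ℝ)+(p.2:ℝ))*ρ + a + b) :=
    fun p => Real.Gamma_pos_of_pos (by positivity)
  set N1 : ℝ := ‖(1:𝔸)‖ + 1 with hN1def
  have hN1pos : 0 < N1 := by have := norm_nonneg (1:𝔸); simp only [hN1def]; linarith
  set v : ℕ × ℕ → 𝔸 := fun p => A ^ p.1 * B * A ^ p.2 with hv
  set φ : ℕ × ℕ → ℝ → ℝ := fun p s =>
    ((Real.Gamma ((p.1:ℝ)*ρ+a))⁻¹ * (Real.Gamma ((p.2:ℝ)*ρ+b))⁻¹) *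
      ((t-s)^((p.1:ℝ)*ρ+a-1) * s^((p.2:ℝ)*ρ+b-1)) with hφ
  set w : ℕ × ℕ → ℝ := fun p =>
    t^(((p.1:ℝ)+(p.2:ℝ))*ρ+a+b-1) / Real.Gamma (((p.1:ℝ)+(p.2:ℝ))*ρ+a+b) with hw
  have hwnn : ∀ p, 0 ≤ w p := fun p => by
    simp only [hw]; positivity
  have hvle : ∀ p : ℕ × ℕ, ‖v p‖ ≤ N1^2 * ‖B‖ * ‖A‖^(p.1+p.2) := by
    intro p
    simp only [hv]
    calc ‖A ^ p.1 * B * A ^ p.2‖ ≤ ‖A ^ p.1 * B‖ * ‖A ^ p.2‖ := norm_mul_le _ _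
      _ ≤ (‖A ^ p.1‖ * ‖B‖) * ‖A ^ p.2‖ := by
          apply mul_le_mul_of_nonneg_right (norm_mul_le _ _) (norm_nonneg _)
      _ ≤ ((N1 * ‖A‖^p.1) * ‖B‖) * (N1 * ‖A‖^p.2) := by
          apply mul_le_mul ?_ (norm_pow_le_one_add A p.2) (norm_nonneg _) (by positivity)
          exact mul_le_mul_of_nonneg_right (norm_pow_le_one_add A p.1) (norm_nonneg _)
      _ = N1^2 * ‖B‖ * ‖A‖^(p.1+p.2) := by rw [pow_add]; ring
  -- key summability
  have hH : Summable (fun p : ℕ × ℕ =>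
      (t^(((p.1+p.2:ℕ):ℝ)*ρ+a+b-1) / Real.Gamma (((p.1+p.2:ℕ):ℝ)*ρ+a+b))
        * (N1^2 * ‖B‖ * ‖A‖^(p.1+p.2))) := by
    rw [← Equiv.summable_iff (Finset.HasAntidiagonal.sigmaAntidiagonalEquivProd (A := ℕ))]
    set H : ℕ → ℝ := fun k =>
      (t^((k:ℝ)*ρ+a+b-1) / Real.Gamma ((k:ℝ)*ρ+a+b)) * (N1^2 * ‖B‖ * ‖A‖^k) with hHdef
    have hHfun : ∀ σ : (Σ n : ℕ, { x // x ∈ Finset.HasAntidiagonal.antidiagonal n }),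
        ((fun p : ℕ × ℕ =>
          (t^(((p.1+p.2:ℕ):ℝ)*ρ+a+b-1) / Real.Gamma (((p.1+p.2:ℕ):ℝ)*ρ+a+b))
            * (N1^2 * ‖B‖ * ‖A‖^(p.1+p.2))) ∘ (Finset.HasAntidiagonal.sigmaAntidiagonalEquivProd (A := ℕ))) σ
          = H σ.1 := by
      rintro ⟨n, ⟨x, hx⟩⟩
      have hx' : x.1 + x.2 = n := Finset.HasAntidiagonal.mem_antidiagonal.1 hx
      simp only [Function.comp_apply, Finset.HasAntidiagonal.sigmaAntidiagonalEquivProd_apply, hHdef, hx']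
    have hΓk : ∀ k : ℕ, 0 < Real.Gamma ((k:ℝ)*ρ+a+b) :=
      fun k => Real.Gamma_pos_of_pos (by positivity)
    have hHnn : ∀ k, 0 ≤ H k := fun k => by simp only [hHdef]; positivity
    refine Summable.congr ?_ (fun σ => (hHfun σ).symm)
    -- Summable (fun σ => H σ.1)
    apply (summable_sigma_of_nonneg (fun σ => hHnn σ.1)).2
    constructor
    · intro n; exact Summable.of_finite
    · apply Summable.congr (f := fun n : ℕ => ((n:ℝ)+1) * H n)
      · have base := (summable_succ_pow_div_gamma hρ (by linarith : (0:ℝ) < a+b)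
          (C := t^ρ*‖A‖) (by positivity)).mul_left (N1^2*‖B‖*t^(a+b-1))
        refine base.congr fun n => ?_
        simp only [hHdef]
        rw [show (n:ℝ)*ρ+(a+b) = (n:ℝ)*ρ+a+b by ring] at *
        rw [show (n:ℝ)*ρ+a+b-1 = (n:ℝ)*ρ + (a+b-1) by ring, Real.rpow_add ht,
          mul_comm (n:ℝ) ρ, Real.rpow_mul ht.le, Real.rpow_natCast, mul_pow]
        rw [show ρ*(n:ℝ) = (n:ℝ)*ρ by ring]
        field_simp
      · intro n
        rw [tsum_fintype]
        have : ∀ x : { x // x ∈ Finset.HasAntidiagonal.antidiagonal n }, H (⟨n, x⟩ : Σ n : ℕ, _).1 = H n := by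
          intro x; rfl
        simp only [this, Finset.sum_const, Finset.card_univ, Fintype.card_coe,
          Finset.Nat.card_antidiagonal, nsmul_eq_mul]
        push_cast
        ring
  have hc_sum : Summable (fun p : ℕ × ℕ => w p * ‖v p‖) := by
    refine Summable.of_nonneg_of_le (fun p => mul_nonneg (hwnn p) (norm_nonneg _))
      (fun p => ?_) hH
    have hcast : ((p.1+p.2:ℕ):ℝ) = (p.1:ℝ)+(p.2:ℝ) := by push_cast; ring
    rw [hcast]
    exact mul_le_mul_of_nonneg_left (hvle p) (hwnn p)
  -- value of the coefficient integral
  have hβint : ∀ p : ℕ × ℕ,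
      IntegrableOn (fun s => (t-s)^((p.1:ℝ)*ρ+a-1) * s^((p.2:ℝ)*ρ+b-1)) (Set.Ioo 0 t) volume := by
    intro p
    have := beta_integrableOn (p := (p.2:ℝ)*ρ+b) (q := (p.1:ℝ)*ρ+a)
      (by positivity) (by positivity) ht
    simpa using this
  have hφint : ∀ p : ℕ × ℕ, IntegrableOn (φ p) (Set.Ioo 0 t) volume := by
    intro p
    simp only [hφ]
    exact (hβint p).const_mul _
  have hφval : ∀ p : ℕ × ℕ, ∫ s in Set.Ioo (0:ℝ) t, φ p s = w p := by
    intro p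
    simp only [hφ]
    rw [integral_const_mul]
    have hbv := beta_Ioo (p := (p.2:ℝ)*ρ+b) (q := (p.1:ℝ)*ρ+a) (by positivity) (by positivity) ht
    rw [hbv]
    simp only [hw]
    rw [show ((p.1:ℝ)+(p.2:ℝ))*ρ+a+b = ((p.1:ℝ)*ρ+a)+((p.2:ℝ)*ρ+b) by ring]
    field_simp
  have hφnn : ∀ p : ℕ × ℕ, ∀ x ∈ Set.Ioo (0:ℝ) t, 0 ≤ φ p x := by
    intro p x hx
    have h1 : (0:ℝ) ≤ t - x := by linarith [hx.2]
    have h2 : (0:ℝ) ≤ x := hx.1.le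
    simp only [hφ]
    have := (hΓa p.1).le
    have := (hΓb p.2).le
    positivity
  have hφmeas : ∀ p : ℕ × ℕ, Measurable (φ p) := by
    intro p
    simp only [hφ]
    fun_prop
  -- Step A + B: rewrite the integral
  rw [intervalIntegral.integral_of_le ht.le, MeasureTheory.integral_Ioc_eq_integral_Ioo]
  have stepB : ∫ s in Set.Ioo (0:ℝ) t, ((t - s) ^ (a - 1) * s ^ (b - 1)) •
        (mlTwo ρ a (((t - s) ^ ρ) • A) * B * mlTwo ρ b ((s ^ ρ) • A))
      = ∫ s in Set.Ioo (0:ℝ) t, ∑' p : ℕ × ℕ, φ p s • v p := by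
    apply MeasureTheory.setIntegral_congr_fun measurableSet_Ioo
    intro s hs
    have hs0 : 0 < s := hs.1
    have hu : 0 < t - s := by linarith [hs.2]
    have Sa := ml_summable_norm A hρ ha hu.le
    have Sb := ml_summable_norm A hρ hb hs0.le
    have Sa' : Summable (fun m : ℕ =>
        ‖(((Real.Gamma ((m:ℝ)*ρ+a))⁻¹ * (t-s)^((m:ℝ)*ρ)) • A^m) * B‖) :=
      Summable.of_nonneg_of_le (fun _ => norm_nonneg _) (fun m => norm_mul_le _ _)
        (Sa.mul_right ‖B‖)
    dsimp only
    rw [ml_eq A ρ a hu.le, ml_eq A ρ b hs0.le,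
      ← Summable.tsum_mul_right B Sa.of_norm,
      tsum_mul_tsum_of_summable_norm Sa' Sb,
      ← Summable.tsum_const_smul ((t - s) ^ (a - 1) * s ^ (b - 1))
        (summable_mul_of_summable_norm Sa' Sb)]
    refine tsum_congr fun p => ?_
    rw [smul_mul_assoc, smul_mul_assoc, mul_smul_comm, smul_smul, smul_smul]
    simp only [hφ, hv]
    congr 1
    rw [show (p.1:ℝ)*ρ+a-1 = (p.1:ℝ)*ρ+(a-1) by ring, Real.rpow_add hu,
      show (p.2:ℝ)*ρ+b-1 = (p.2:ℝ)*ρ+(b-1) by ring, Real.rpow_add hs0]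
    ring
  rw [stepB]
  -- Step C: swap integral and sum
  have hmeas : ∀ p : ℕ × ℕ,
      AEStronglyMeasurable (fun s => φ p s • v p) (volume.restrict (Set.Ioo 0 t)) :=
    fun p => ((hφmeas p).aestronglyMeasurable).smul_const _
  have hlkey : ∀ p : ℕ × ℕ,
      ∫⁻ s, ‖φ p s • v p‖₊ ∂(volume.restrict (Set.Ioo 0 t)) = ENNReal.ofReal (w p * ‖v p‖) := by
    intro p
    have hφae : 0 ≤ᵐ[volume.restrict (Set.Ioo (0:ℝ) t)] φ p :=
      (ae_restrict_iff' measurableSet_Ioo).2 (Filter.Eventually.of_forall (hφnn p))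
    calc ∫⁻ s, ‖φ p s • v p‖₊ ∂(volume.restrict (Set.Ioo 0 t))
        = ∫⁻ s, (‖φ p s‖₊ : ENNReal) * ‖v p‖₊ ∂(volume.restrict (Set.Ioo 0 t)) := by
          simp only [nnnorm_smul, ENNReal.coe_mul]
      _ = (∫⁻ s, (‖φ p s‖₊ : ENNReal) ∂(volume.restrict (Set.Ioo 0 t))) * ‖v p‖₊ :=
          lintegral_mul_const _ (hφmeas p).enorm
      _ = (∫⁻ s, ENNReal.ofReal (φ p s) ∂(volume.restrict (Set.Ioo 0 t))) * ‖v p‖₊ := by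
          congr 1
          apply lintegral_congr_ae
          filter_upwards [hφae] with x hx
          exact Real.enorm_eq_ofReal hx
      _ = ENNReal.ofReal (∫ s in Set.Ioo (0:ℝ) t, φ p s) * ‖v p‖₊ := by
          rw [← ofReal_integral_eq_lintegral_ofReal (hφint p) hφae]
      _ = ENNReal.ofReal (w p * ‖v p‖) := by
          rw [hφval p, ENNReal.ofReal_mul (hwnn p), ofReal_norm, enorm_eq_nnnorm]
  rw [MeasureTheory.integral_tsum hmeas (by
    rw [funext (f := fun p => ∫⁻ s in Set.Ioo 0 t, ‖φ p s • v p‖ₑ) hlkey, ← ENNReal.ofReal_tsum_of_nonneg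
      (fun p => mul_nonneg (hwnn p) (norm_nonneg _)) hc_sum]
    exact ENNReal.ofReal_ne_top)]
  -- Step D: evaluate each integral
  have stepD : ∀ p : ℕ × ℕ, ∫ s in Set.Ioo (0:ℝ) t, φ p s • v p = w p • v p := by
    intro p
    rw [integral_smul_const, hφval p]
  rw [tsum_congr stepD]
  -- Step E: regroup along antidiagonals
  have hΦsum : Summable (fun p : ℕ × ℕ => w p • v p) := by
    apply Summable.of_norm
    refine hc_sum.congr fun p => ?_
    rw [norm_smul, Real.norm_eq_abs, abs_of_nonneg (hwnn p)]
  have hsig : Summable (fun c : (Σ n : ℕ, { x // x ∈ Finset.HasAntidiagonal.antidiagonal n }) =>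
      w ((Finset.HasAntidiagonal.sigmaAntidiagonalEquivProd (A := ℕ)) c)
        • v ((Finset.HasAntidiagonal.sigmaAntidiagonalEquivProd (A := ℕ)) c)) :=
    (Equiv.summable_iff (Finset.HasAntidiagonal.sigmaAntidiagonalEquivProd (A := ℕ))).2 hΦsum
  rw [← Equiv.tsum_eq (Finset.HasAntidiagonal.sigmaAntidiagonalEquivProd (A := ℕ)) (fun p => w p • v p),
    hsig.tsum_sigma]
  refine tsum_congr fun k => ?_
  have inner : ∑' (x : { x // x ∈ Finset.HasAntidiagonal.antidiagonal k }),
      w ((Finset.HasAntidiagonal.sigmaAntidiagonalEquivProd (A := ℕ)) ⟨k, x⟩)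
        • v ((Finset.HasAntidiagonal.sigmaAntidiagonalEquivProd (A := ℕ)) ⟨k, x⟩)
      = ∑ p ∈ Finset.HasAntidiagonal.antidiagonal k, w p • v p := by
    rw [← Finset.tsum_subtype (Finset.HasAntidiagonal.antidiagonal k) (fun p => w p • v p)]
    rfl
  rw [inner]
  have hscal : ∀ p ∈ Finset.HasAntidiagonal.antidiagonal k, w p • v p
      = (t ^ ((k:ℝ)*ρ + a + b - 1) / Real.Gamma ((k:ℝ)*ρ + a + b)) • v p := by
    intro p hp
    have hk : (p.1:ℝ) + (p.2:ℝ) = (k:ℝ) := by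
      have := Finset.HasAntidiagonal.mem_antidiagonal.1 hp
      exact_mod_cast congrArg (Nat.cast : ℕ → ℝ) this
    simp only [hw, hk]
  rw [Finset.sum_congr rfl hscal, ← Finset.smul_sum]
  congr 1
  rw [show (fun p : ℕ × ℕ => v p) = fun p => A ^ p.1 * B * A ^ p.2 from rfl]
  have h1 : ∑ p ∈ Finset.HasAntidiagonal.antidiagonal k, v p
      = ∑ l ∈ Finset.range (k+1), A ^ l * B * A ^ (k - l) := by
    rw [show (∑ p ∈ Finset.HasAntidiagonal.antidiagonal k, v p)
        = ∑ p ∈ Finset.HasAntidiagonal.antidiagonal k, (fun i j => A ^ i * B * A ^ j) p.1 p.2 from rfl]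
    rw [Finset.Nat.sum_antidiagonal_eq_sum_range_succ (fun i j => A ^ i * B * A ^ j) k]
  rw [h1]
  have h2 := Finset.sum_range_reflect (fun l => A ^ (k - l) * B * A ^ l) (k+1)
  rw [← h2]
  apply Finset.sum_congr rfl
  intro j hj
  have hjk : j ≤ k := by
    have := Finset.mem_range.1 hj; omega
  have e1 : k + 1 - 1 - j = k - j := by omega
  rw [e1, Nat.sub_sub_self hjk]
end

section
/- Let A, B be elements of a Banach algebra, let ρ > 0, α > 0 and γ < α be real, let n ∈ ℕ, and for m ∈ ℕ set f_m(t) = ∑_{k=0}^∞ Q_{k,m}^{A,B} t^{kρ+mα+α−γ−1} / Γ(kρ+mα+α−γ). Then for every t > 0, ∫₀ᵗ (t−s)^{α−1} E_{ρ,α}(A(t−s)^{ρ}) · B · f_n(s) ds = f_{n+1}(t), where the integral is a Bochner integral. -/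
open MeasureTheory

section Helpers

open Set intervalIntegral

private lemma Gamma_lb {s u : ℝ} (hs : 1 ≤ s) (hu : 0 < u) :
    u ^ (s - 1) * Real.exp (-(u + 1)) ≤ Real.Gamma s := by
  have hs0 : 0 < s := lt_of_lt_of_le one_pos hs
  rw [Real.Gamma_eq_integral hs0]
  have hint : IntegrableOn (fun x : ℝ => Real.exp (-x) * x ^ (s - 1)) (Ioi 0) :=
    Real.GammaIntegral_convergent hs0
  have hsub : Ioc u (u + 1) ⊆ Ioi 0 := fun x hx => lt_trans hu hx.1
  have h2 : ∫ x in Ioc u (u + 1), Real.exp (-x) * x ^ (s - 1)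
      ≤ ∫ x in Ioi 0, Real.exp (-x) * x ^ (s - 1) := by
    apply setIntegral_mono_set hint
    · filter_upwards [ae_restrict_mem measurableSet_Ioi] with x hx
      exact mul_nonneg (Real.exp_nonneg _) (Real.rpow_nonneg (le_of_lt hx) _)
    · exact HasSubset.Subset.eventuallyLE hsub
  refine le_trans ?_ h2
  have h1 : ∫ x in Ioc u (u + 1), (u ^ (s - 1) * Real.exp (-(u + 1)))
      ≤ ∫ x in Ioc u (u + 1), Real.exp (-x) * x ^ (s - 1) := by
    apply setIntegral_mono_on (integrableOn_const (by simp))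
      (hint.mono_set hsub) measurableSet_Ioc
    intro x hx
    rw [mul_comm (Real.exp (-x))]
    apply mul_le_mul
    · exact Real.rpow_le_rpow hu.le hx.1.le (by linarith)
    · exact Real.exp_le_exp.2 (by linarith [hx.2])
    · exact Real.exp_nonneg _
    · exact Real.rpow_nonneg (hu.trans hx.1).le _
  refine le_trans ?_ h1
  rw [setIntegral_const, Real.volume_real_Ioc, show u + 1 - u = 1 by ring]
  simp

private lemma exists_bound_div_Gamma {ρ c : ℝ} (x : ℝ) (hρ : 0 < ρ) (hc : 0 < c) (hx : 0 ≤ x) :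
    ∃ C : ℝ, 0 ≤ C ∧ ∀ j : ℕ, x ^ j / Real.Gamma ((j : ℝ) * ρ + c) ≤ C * (2⁻¹ : ℝ) ^ j := by
  set u : ℝ := max 1 ((2 * x + 1) ^ ρ⁻¹) with hu_def
  have hu1 : (1 : ℝ) ≤ u := le_max_left _ _
  have hu : (0 : ℝ) < u := lt_of_lt_of_le one_pos hu1
  have hu2 : 2 * x + 1 ≤ u ^ ρ := by
    calc 2 * x + 1 = ((2 * x + 1) ^ ρ⁻¹) ^ ρ := (Real.rpow_inv_rpow (by positivity) hρ.ne').symm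
    _ ≤ u ^ ρ := Real.rpow_le_rpow (by positivity) (le_max_right _ _) hρ.le
  have huρ : (0 : ℝ) < u ^ ρ := Real.rpow_pos_of_pos hu ρ
  have hxu : x / u ^ ρ ≤ 2⁻¹ := by
    rw [div_le_iff₀ huρ]; nlinarith
  set c₀ : ℝ := u ^ (1 - c) * Real.exp (u + 1) with hc₀_def
  have hc₀ : 0 ≤ c₀ := by positivity
  set K : ℕ := ⌈ρ⁻¹⌉₊ with hK_def
  set C : ℝ := c₀ + ∑ j ∈ Finset.range K, x ^ j * 2 ^ j / Real.Gamma ((j : ℝ) * ρ + c) with hC_def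
  have hterm : ∀ j : ℕ, 0 ≤ x ^ j * 2 ^ j / Real.Gamma ((j : ℝ) * ρ + c) := by
    intro j
    have := Real.Gamma_pos_of_pos (show (0:ℝ) < (j : ℝ) * ρ + c by positivity)
    positivity
  refine ⟨C, by positivity, fun j => ?_⟩
  rcases lt_or_ge j K with hj | hj
  · have h1 : x ^ j / Real.Gamma ((j : ℝ) * ρ + c)
        = (x ^ j * 2 ^ j / Real.Gamma ((j : ℝ) * ρ + c)) * 2⁻¹ ^ j := by
      field_simp; rw [mul_assoc, ← mul_pow]; norm_num
    rw [h1]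
    apply mul_le_mul_of_nonneg_right _ (by positivity)
    calc x ^ j * 2 ^ j / Real.Gamma ((j : ℝ) * ρ + c)
        ≤ ∑ i ∈ Finset.range K, x ^ i * 2 ^ i / Real.Gamma ((i : ℝ) * ρ + c) :=
          Finset.single_le_sum (fun i _ => hterm i) (Finset.mem_range.2 hj)
      _ ≤ C := by rw [hC_def]; linarith
  · have hjρ : (1 : ℝ) ≤ (j : ℝ) * ρ + c := by
      have h1 : ρ⁻¹ ≤ (K : ℝ) := Nat.le_ceil _
      have h2 : (K : ℝ) ≤ (j : ℝ) := Nat.cast_le.2 hj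
      have : (1 : ℝ) ≤ (j : ℝ) * ρ := by
        rw [← inv_mul_cancel₀ hρ.ne']
        exact mul_le_mul_of_nonneg_right (h1.trans h2) hρ.le
      linarith
    have hΓ := Gamma_lb hjρ hu
    have hΓpos : 0 < Real.Gamma ((j : ℝ) * ρ + c) :=
      Real.Gamma_pos_of_pos (by linarith)
    have hden : (0:ℝ) < u ^ ((j : ℝ) * ρ + c - 1) * Real.exp (-(u + 1)) := by positivity
    calc x ^ j / Real.Gamma ((j : ℝ) * ρ + c)
        ≤ x ^ j / (u ^ ((j : ℝ) * ρ + c - 1) * Real.exp (-(u + 1))) := by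
          apply div_le_div_of_nonneg_left (by positivity) hden hΓ
      _ = c₀ * (x / u ^ ρ) ^ j := by
          have e1 : (u ^ ρ) ^ j = u ^ (ρ * (j : ℝ)) := by
            rw [← Real.rpow_natCast (u ^ ρ) j, ← Real.rpow_mul hu.le]
          have e2 : u ^ ((j : ℝ) * ρ + c - 1) = u ^ (ρ * (j : ℝ)) * u ^ (c - 1) := by
            rw [← Real.rpow_add hu]; ring_nf
          have h4 : u ^ (1 - c) = (u ^ (c - 1))⁻¹ := by
            rw [← Real.rpow_neg hu.le]; norm_num
          have h5 : (0:ℝ) < u ^ (ρ * (j : ℝ)) := Real.rpow_pos_of_pos hu _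
          have h6 : (0:ℝ) < u ^ (c - 1) := Real.rpow_pos_of_pos hu _
          rw [div_pow, e1, hc₀_def, e2, Real.exp_neg, h4]
          field_simp
      _ ≤ c₀ * 2⁻¹ ^ j := by
          apply mul_le_mul_of_nonneg_left _ hc₀
          exact pow_le_pow_left₀ (by positivity) hxu j
      _ ≤ C * 2⁻¹ ^ j := by
          apply mul_le_mul_of_nonneg_right _ (by positivity)
          rw [hC_def]
          exact le_add_of_nonneg_right (Finset.sum_nonneg fun i _ => hterm i)

private lemma exists_bound_pow_div_Gamma {ρ c : ℝ} (x : ℝ) (hρ : 0 < ρ) (hc : 0 < c)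
    (hx : 0 ≤ x) (p : ℕ) :
    ∃ C : ℝ, 0 ≤ C ∧ ∀ j : ℕ,
      ((j : ℝ) + 1) ^ p * x ^ j / Real.Gamma ((j : ℝ) * ρ + c) ≤ C * (2⁻¹ : ℝ) ^ j := by
  obtain ⟨C, hC0, hC⟩ := exists_bound_div_Gamma (2 ^ p * x) hρ hc (by positivity)
  refine ⟨C, hC0, fun j => ?_⟩
  have hΓ : (0:ℝ) < Real.Gamma ((j : ℝ) * ρ + c) :=
    Real.Gamma_pos_of_pos (by positivity)
  have h1 : ((j : ℝ) + 1) ^ p * x ^ j ≤ (2 ^ p * x) ^ j := by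
    have h2 : ((j : ℝ) + 1) ≤ 2 ^ j := by
      exact_mod_cast Nat.lt_two_pow_self (n := j)
    calc ((j : ℝ) + 1) ^ p * x ^ j ≤ ((2:ℝ) ^ j) ^ p * x ^ j := by
          apply mul_le_mul_of_nonneg_right _ (by positivity)
          exact pow_le_pow_left₀ (by positivity) h2 p
      _ = (2 ^ p * x) ^ j := by rw [← pow_mul, mul_comm j p, pow_mul, mul_pow]
  calc ((j : ℝ) + 1) ^ p * x ^ j / Real.Gamma ((j : ℝ) * ρ + c)
      ≤ (2 ^ p * x) ^ j / Real.Gamma ((j : ℝ) * ρ + c) := by gcongr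
    _ ≤ C * (2⁻¹ : ℝ) ^ j := hC j

private lemma summable_pow_div_Gamma {ρ c : ℝ} (x : ℝ) (hρ : 0 < ρ) (hc : 0 < c) (hx : 0 ≤ x)
    (p : ℕ) :
    Summable fun j : ℕ => ((j : ℝ) + 1) ^ p * x ^ j / Real.Gamma ((j : ℝ) * ρ + c) := by
  obtain ⟨C, hC0, hC⟩ := exists_bound_pow_div_Gamma x hρ hc hx p
  apply Summable.of_nonneg_of_le
    (fun j => by
      have := Real.Gamma_pos_of_pos (show (0:ℝ) < (j:ℝ) * ρ + c by positivity)
      positivity)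
    hC
  exact (summable_geometric_of_lt_one (by norm_num) (by norm_num)).mul_left C

variable {𝔸 : Type*} [NormedRing 𝔸]

private lemma norm_pow_le_max (A : 𝔸) (l : ℕ) : ‖A ^ l‖ ≤ max ‖(1 : 𝔸)‖ 1 * (‖A‖ + 1) ^ l := by
  cases l with
  | zero => simpa using le_max_left ‖(1:𝔸)‖ 1
  | succ m =>
    calc ‖A ^ (m + 1)‖ ≤ ‖A‖ ^ (m + 1) := norm_pow_le' A m.succ_pos
      _ ≤ (‖A‖ + 1) ^ (m + 1) := pow_le_pow_left₀ (norm_nonneg A) (by linarith) _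
      _ ≤ max ‖(1:𝔸)‖ 1 * (‖A‖ + 1) ^ (m + 1) := by
          nth_rewrite 1 [← one_mul ((‖A‖ + 1) ^ (m + 1))]
          exact mul_le_mul_of_nonneg_right (le_max_right _ _) (by positivity)

private lemma norm_pow_mul_le (A B : 𝔸) (l : ℕ) : ‖A ^ l * B‖ ≤ (‖A‖ + 1) ^ l * ‖B‖ := by
  cases l with
  | zero => simpa using le_refl ‖B‖
  | succ m =>
    calc ‖A ^ (m + 1) * B‖ ≤ ‖A ^ (m + 1)‖ * ‖B‖ := norm_mul_le _ _
      _ ≤ ‖A‖ ^ (m + 1) * ‖B‖ := by gcongr; exact norm_pow_le' A m.succ_pos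
      _ ≤ (‖A‖ + 1) ^ (m + 1) * ‖B‖ :=
          mul_le_mul_of_nonneg_right (pow_le_pow_left₀ (norm_nonneg A) (by linarith) _)
            (norm_nonneg B)

private lemma norm_Q_le (A B : 𝔸) (k m : ℕ) :
    ‖Q A B k m‖ ≤ max ‖(1 : 𝔸)‖ 1 * ((k : ℝ) + 1) ^ m * (‖A‖ + 1) ^ k * ‖B‖ ^ m := by
  induction m generalizing k with
  | zero => simpa [Q] using norm_pow_le_max A k
  | succ m ih =>
    show ‖∑ l ∈ Finset.range (k + 1), A ^ (k - l) * B * Q A B l m‖ ≤ _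
    calc ‖∑ l ∈ Finset.range (k + 1), A ^ (k - l) * B * Q A B l m‖
        ≤ ∑ l ∈ Finset.range (k + 1), ‖A ^ (k - l) * B * Q A B l m‖ := norm_sum_le _ _
      _ ≤ ∑ l ∈ Finset.range (k + 1),
            (‖A‖ + 1) ^ k * ‖B‖ * (max ‖(1:𝔸)‖ 1 * ((k : ℝ) + 1) ^ m * ‖B‖ ^ m) := by
          apply Finset.sum_le_sum
          intro l hl
          have hl' : l ≤ k := Nat.lt_succ_iff.mp (Finset.mem_range.mp hl)
          calc ‖A ^ (k - l) * B * Q A B l m‖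
              ≤ ‖A ^ (k - l) * B‖ * ‖Q A B l m‖ := norm_mul_le _ _
            _ ≤ ((‖A‖ + 1) ^ (k - l) * ‖B‖) *
                  (max ‖(1:𝔸)‖ 1 * ((l : ℝ) + 1) ^ m * (‖A‖ + 1) ^ l * ‖B‖ ^ m) := by
                apply mul_le_mul (norm_pow_mul_le A B (k - l)) (ih l) (norm_nonneg _)
                positivity
            _ = ((‖A‖ + 1) ^ (k - l) * (‖A‖ + 1) ^ l) * ‖B‖ *
                  (max ‖(1:𝔸)‖ 1 * ((l : ℝ) + 1) ^ m * ‖B‖ ^ m) := by ring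
            _ ≤ (‖A‖ + 1) ^ k * ‖B‖ * (max ‖(1:𝔸)‖ 1 * ((k : ℝ) + 1) ^ m * ‖B‖ ^ m) := by
                rw [← pow_add, Nat.sub_add_cancel hl']
                have hlk : ((l : ℝ) + 1) ≤ ((k : ℝ) + 1) := by
                  exact_mod_cast Nat.succ_le_succ hl'
                gcongr
      _ = ((k : ℝ) + 1) * ((‖A‖ + 1) ^ k * ‖B‖ *
            (max ‖(1:𝔸)‖ 1 * ((k : ℝ) + 1) ^ m * ‖B‖ ^ m)) := by
          rw [Finset.sum_const, Finset.card_range]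
          push_cast
          ring
      _ = max ‖(1:𝔸)‖ 1 * ((k : ℝ) + 1) ^ (m + 1) * (‖A‖ + 1) ^ k * ‖B‖ ^ (m + 1) := by ring

private lemma real_betaIntegral {a b : ℝ} (ha : 0 < a) (hb : 0 < b) :
    ∫ x in (0:ℝ)..1, x ^ (a - 1) * (1 - x) ^ (b - 1)
      = Real.Gamma a * Real.Gamma b / Real.Gamma (a + b) := by
  have key := Complex.Gamma_mul_Gamma_eq_betaIntegral
    (s := (a : ℂ)) (t := (b : ℂ)) (by simpa using ha) (by simpa using hb)
  have hβ : Complex.betaIntegral (a : ℂ) (b : ℂ)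
      = ((∫ x in (0:ℝ)..1, x ^ (a - 1) * (1 - x) ^ (b - 1) : ℝ) : ℂ) := by
    rw [Complex.betaIntegral, ← intervalIntegral.integral_ofReal]
    apply intervalIntegral.integral_congr
    intro x hx
    rw [Set.uIcc_of_le (by norm_num : (0:ℝ) ≤ 1)] at hx
    push_cast
    rw [Complex.ofReal_cpow hx.1, Complex.ofReal_cpow (by linarith [hx.2])]
    push_cast
    ring
  rw [hβ] at key
  have hΓab : Complex.Gamma ((a : ℂ) + (b : ℂ)) = ((Real.Gamma (a + b) : ℝ) : ℂ) := by
    rw [← Complex.ofReal_add, Complex.Gamma_ofReal]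
  rw [Complex.Gamma_ofReal, Complex.Gamma_ofReal, hΓab] at key
  have key2 : Real.Gamma a * Real.Gamma b
      = Real.Gamma (a + b) * ∫ x in (0:ℝ)..1, x ^ (a - 1) * (1 - x) ^ (b - 1) := by
    exact_mod_cast key
  have hΓ : Real.Gamma (a + b) ≠ 0 := (Real.Gamma_pos_of_pos (by linarith)).ne'
  rw [key2]
  field_simp

private lemma beta_conv {a b t : ℝ} (ha : 0 < a) (hb : 0 < b) (ht : 0 < t) :
    ∫ s in (0:ℝ)..t, (t - s) ^ (a - 1) * s ^ (b - 1)
      = (Real.Gamma a * Real.Gamma b / Real.Gamma (a + b)) * t ^ (a + b - 1) := by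
  have h0 : ∫ x in (0:ℝ)..1, (fun s => (t - s) ^ (a - 1) * s ^ (b - 1)) (t * x)
      = t⁻¹ • ∫ s in (t * 0)..(t * 1), (t - s) ^ (a - 1) * s ^ (b - 1) :=
    intervalIntegral.integral_comp_mul_left
      (fun s => (t - s) ^ (a - 1) * s ^ (b - 1)) ht.ne'
  rw [mul_zero, mul_one] at h0
  have h1 : ∫ x in (0:ℝ)..1, (fun s => (t - s) ^ (a - 1) * s ^ (b - 1)) (t * x)
      = t ^ (a - 1) * t ^ (b - 1) * ∫ x in (0:ℝ)..1, x ^ (b - 1) * (1 - x) ^ (a - 1) := by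
    rw [← intervalIntegral.integral_const_mul]
    apply intervalIntegral.integral_congr
    intro x hx
    rw [Set.uIcc_of_le (by norm_num : (0:ℝ) ≤ 1)] at hx
    simp only
    have h2 : t - t * x = t * (1 - x) := by ring
    rw [h2, Real.mul_rpow ht.le (by linarith [hx.2]), Real.mul_rpow ht.le hx.1]
    ring
  rw [h1, real_betaIntegral hb ha] at h0
  have h3 : ∫ s in (0:ℝ)..t, (t - s) ^ (a - 1) * s ^ (b - 1)
      = t * (t ^ (a - 1) * t ^ (b - 1) * (Real.Gamma b * Real.Gamma a / Real.Gamma (b + a))) := by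
    rw [h0, smul_eq_mul, ← mul_assoc, mul_inv_cancel₀ ht.ne', one_mul]
  rw [h3]
  have h4 : t * (t ^ (a - 1) * t ^ (b - 1)) = t ^ (a + b - 1) := by
    nth_rewrite 1 [← Real.rpow_one t]
    rw [← Real.rpow_add ht, ← Real.rpow_add ht]
    ring_nf
  rw [add_comm b a]
  calc t * (t ^ (a - 1) * t ^ (b - 1) * (Real.Gamma b * Real.Gamma a / Real.Gamma (a + b)))
      = (t * (t ^ (a - 1) * t ^ (b - 1))) * (Real.Gamma b * Real.Gamma a / Real.Gamma (a + b)) := by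
        ring
    _ = Real.Gamma a * Real.Gamma b / Real.Gamma (a + b) * t ^ (a + b - 1) := by
        rw [h4]; ring

private lemma intervalIntegrable_conv {a b t : ℝ} (ha : 0 < a) (hb : 0 < b) (ht : 0 < t) :
    IntervalIntegrable (fun s => (t - s) ^ (a - 1) * s ^ (b - 1)) volume 0 t := by
  have htt : (0:ℝ) < t / 2 := by linarith
  apply IntervalIntegrable.trans (b := t / 2)
  · have h1 : IntervalIntegrable (fun s : ℝ => s ^ (b - 1)) volume 0 (t / 2) :=
      intervalIntegral.intervalIntegrable_rpow' (by linarith)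
    have h2 : ContinuousOn (fun s : ℝ => (t - s) ^ (a - 1)) (Set.uIcc 0 (t / 2)) := by
      apply ContinuousOn.rpow_const
      · exact (continuous_const.sub continuous_id).continuousOn
      · intro x hx
        rw [Set.uIcc_of_le htt.le] at hx
        left
        intro h
        nlinarith [hx.1, hx.2]
    have := h1.mul_continuousOn h2
    simpa [mul_comm] using this
  · have h1 : IntervalIntegrable (fun s : ℝ => s ^ (a - 1)) volume 0 (t / 2) :=
      intervalIntegral.intervalIntegrable_rpow' (by linarith)
    have h2 : IntervalIntegrable (fun s : ℝ => (t - s) ^ (a - 1)) volume (t - 0) (t - (t / 2)) :=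
      h1.comp_sub_left t
    rw [sub_zero, show t - t / 2 = t / 2 by ring] at h2
    have h3 : ContinuousOn (fun s : ℝ => s ^ (b - 1)) (Set.uIcc (t / 2) t) := by
      apply ContinuousOn.rpow_const continuousOn_id
      intro x hx
      rw [Set.uIcc_of_le (by linarith : t / 2 ≤ t)] at hx
      left
      have h4 := hx.1
      simp only [id]
      intro h
      rw [h] at h4
      linarith
    exact (h2.symm.mul_continuousOn h3)

end Helpers

/-- Convolving `(t−s)^{α−1} E_{ρ,α}(A(t−s)^ρ) B` with
`f_n(s) = ∑_k Q_{k,n}^{A,B} s^{kρ+nα+α−γ−1}/Γ(kρ+nα+α−γ)` yields `f_{n+1}(t)`. -/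
theorem mlTwo_convolution_Q {𝔸 : Type*} [NormedRing 𝔸] [NormedAlgebra ℝ 𝔸] [CompleteSpace 𝔸]
    (A B : 𝔸) (ρ α γ : ℝ) (hρ : 0 < ρ) (hα : 0 < α) (hγ : γ < α) (n : ℕ)
    (f : ℕ → ℝ → 𝔸)
    (hf : ∀ (m : ℕ) (t : ℝ), f m t
      = ∑' k : ℕ, (t ^ ((k : ℝ) * ρ + (m : ℝ) * α + α - γ - 1) /
          Real.Gamma ((k : ℝ) * ρ + (m : ℝ) * α + α - γ)) • Q A B k m)
    (t : ℝ) (ht : 0 < t) :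
    ∫ s in (0:ℝ)..t, ((t - s) ^ (α - 1)) • (mlTwo ρ α (((t - s) ^ ρ) • A) * B * f n s)
      = f (n + 1) t := by
  classical
  have hnn : (0:ℝ) ≤ (n : ℝ) * α := by positivity
  have hb0 : ∀ k : ℕ, (0:ℝ) < (k : ℝ) * ρ + (n : ℝ) * α + α - γ := by
    intro k
    have h1 : (0:ℝ) ≤ (k : ℝ) * ρ := by positivity
    linarith
  have he0 : ∀ j : ℕ, (0:ℝ) < (j : ℝ) * ρ + (n : ℝ) * α + 2 * α - γ := by
    intro j
    have h1 : (0:ℝ) ≤ (j : ℝ) * ρ := by positivity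
    linarith
  have ha0 : ∀ l : ℕ, (0:ℝ) < (l : ℝ) * ρ + α := fun l => by positivity
  have hΓa : ∀ l : ℕ, (0:ℝ) < Real.Gamma ((l : ℝ) * ρ + α) :=
    fun l => Real.Gamma_pos_of_pos (ha0 l)
  have hΓb : ∀ k : ℕ, (0:ℝ) < Real.Gamma ((k : ℝ) * ρ + (n : ℝ) * α + α - γ) :=
    fun k => Real.Gamma_pos_of_pos (hb0 k)
  have hΓe : ∀ j : ℕ, (0:ℝ) < Real.Gamma ((j : ℝ) * ρ + (n : ℝ) * α + 2 * α - γ) :=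
    fun j => Real.Gamma_pos_of_pos (he0 j)
  set N : ℝ := max ‖(1:𝔸)‖ 1 with hN_def
  have hN1 : (1:ℝ) ≤ N := le_max_right _ _
  have hN0 : (0:ℝ) ≤ N := by linarith
  set V : ℕ → ℕ → 𝔸 := fun l k => A ^ l * (B * Q A B k n) with hV_def
  set e : ℕ → ℝ := fun j =>
    t ^ ((j : ℝ) * ρ + (n : ℝ) * α + 2 * α - γ - 1) /
      Real.Gamma ((j : ℝ) * ρ + (n : ℝ) * α + 2 * α - γ) with he_def
  set F : ℕ × ℕ → ℝ → 𝔸 := fun p s =>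
    ((Real.Gamma ((p.1 : ℝ) * ρ + α) *
        Real.Gamma ((p.2 : ℝ) * ρ + (n : ℝ) * α + α - γ))⁻¹ *
      ((t - s) ^ ((p.1 : ℝ) * ρ + α - 1) *
        s ^ ((p.2 : ℝ) * ρ + (n : ℝ) * α + α - γ - 1))) • V p.1 p.2 with hF_def
  have he_nonneg : ∀ j, 0 ≤ e j := fun j =>
    div_nonneg (Real.rpow_nonneg ht.le _) (hΓe j).le
  set W : ℕ → ℝ := fun j => N * ((j : ℝ) + 1) ^ n * (‖A‖ + 1) ^ j * ‖B‖ ^ (n + 1) with hW_def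
  have hW0 : ∀ j, 0 ≤ W j := fun j => by simp only [hW_def]; positivity
  have hVle : ∀ l k : ℕ, ‖V l k‖ ≤ W (l + k) := by
    intro l k
    simp only [hV_def, hW_def]
    calc ‖A ^ l * (B * Q A B k n)‖
        ≤ (‖A‖ + 1) ^ l * ‖B * Q A B k n‖ := norm_pow_mul_le A _ l
      _ ≤ (‖A‖ + 1) ^ l * (‖B‖ * ‖Q A B k n‖) := by
          apply mul_le_mul_of_nonneg_left (norm_mul_le _ _) (by positivity)
      _ ≤ (‖A‖ + 1) ^ l * (‖B‖ * (N * ((k : ℝ) + 1) ^ n * (‖A‖ + 1) ^ k * ‖B‖ ^ n)) := by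
          apply mul_le_mul_of_nonneg_left _ (by positivity)
          apply mul_le_mul_of_nonneg_left _ (norm_nonneg B)
          rw [hN_def]
          exact norm_Q_le A B k n
      _ ≤ (‖A‖ + 1) ^ l *
            (‖B‖ * (N * (((l + k : ℕ) : ℝ) + 1) ^ n * (‖A‖ + 1) ^ k * ‖B‖ ^ n)) := by
          have hcast : ((k : ℝ) + 1) ≤ (((l + k : ℕ) : ℝ) + 1) := by
            push_cast
            linarith [(Nat.cast_nonneg l : (0:ℝ) ≤ (l:ℝ))]
          gcongr
      _ = N * (((l + k : ℕ) : ℝ) + 1) ^ n * (‖A‖ + 1) ^ (l + k) * ‖B‖ ^ (n + 1) := by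
          rw [pow_add (‖A‖ + 1) l k, pow_succ ‖B‖ n]
          ring
  -- geometric domination of the diagonal coefficients
  obtain ⟨C, hC0, hC⟩ := exists_bound_pow_div_Gamma (x := t ^ ρ * (‖A‖ + 1)) hρ
    (show (0:ℝ) < (n : ℝ) * α + 2 * α - γ by linarith) (by positivity) n
  set C2 : ℝ := N * ‖B‖ ^ (n + 1) * t ^ ((n : ℝ) * α + 2 * α - γ - 1) * C with hC2_def
  have hC2_0 : 0 ≤ C2 := by
    simp only [hC2_def]
    have := Real.rpow_nonneg ht.le ((n : ℝ) * α + 2 * α - γ - 1)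
    positivity
  have hEbound : ∀ j : ℕ, e j * W j ≤ C2 * (2⁻¹ : ℝ) ^ j := by
    intro j
    have ht1 : (t ^ ρ) ^ j * t ^ ((n : ℝ) * α + 2 * α - γ - 1)
        = t ^ ((j : ℝ) * ρ + (n : ℝ) * α + 2 * α - γ - 1) := by
      rw [← Real.rpow_natCast (t ^ ρ) j, ← Real.rpow_mul ht.le, ← Real.rpow_add ht]
      congr 1
      ring
    have hΓeq : Real.Gamma ((j : ℝ) * ρ + (n : ℝ) * α + 2 * α - γ)
        = Real.Gamma ((j : ℝ) * ρ + ((n : ℝ) * α + 2 * α - γ)) := by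
      congr 1
      ring
    have key := hC j
    calc e j * W j
        = (N * ‖B‖ ^ (n + 1) * t ^ ((n : ℝ) * α + 2 * α - γ - 1)) *
            (((j : ℝ) + 1) ^ n * (t ^ ρ * (‖A‖ + 1)) ^ j /
              Real.Gamma ((j : ℝ) * ρ + ((n : ℝ) * α + 2 * α - γ))) := by
          simp only [he_def, hW_def]
          rw [← hΓeq, ← ht1, mul_pow]
          ring
      _ ≤ (N * ‖B‖ ^ (n + 1) * t ^ ((n : ℝ) * α + 2 * α - γ - 1)) * (C * (2⁻¹ : ℝ) ^ j) := by
          apply mul_le_mul_of_nonneg_left key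
          have := Real.rpow_nonneg ht.le ((n : ℝ) * α + 2 * α - γ - 1)
          positivity
      _ = C2 * (2⁻¹ : ℝ) ^ j := by simp only [hC2_def]; ring
  have hgeo : Summable fun p : ℕ × ℕ => C2 * ((2⁻¹ : ℝ) ^ p.1 * (2⁻¹ : ℝ) ^ p.2) := by
    apply Summable.mul_left
    apply Summable.mul_of_nonneg (summable_geometric_of_lt_one (by norm_num) (by norm_num))
      (summable_geometric_of_lt_one (by norm_num) (by norm_num))
    · intro i; positivity
    · intro i; positivity
  have hS3 : Summable fun p : ℕ × ℕ => e (p.1 + p.2) * W (p.1 + p.2) := by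
    apply Summable.of_nonneg_of_le
      (fun p => mul_nonneg (he_nonneg _) (hW0 _)) (fun p => ?_) hgeo
    calc e (p.1 + p.2) * W (p.1 + p.2) ≤ C2 * (2⁻¹ : ℝ) ^ (p.1 + p.2) := hEbound _
      _ = C2 * ((2⁻¹ : ℝ) ^ p.1 * (2⁻¹ : ℝ) ^ p.2) := by rw [pow_add]
  have hS3V : Summable fun p : ℕ × ℕ => e (p.1 + p.2) * ‖V p.1 p.2‖ :=
    Summable.of_nonneg_of_le (fun p => mul_nonneg (he_nonneg _) (norm_nonneg _))
      (fun p => mul_le_mul_of_nonneg_left (hVle _ _) (he_nonneg _)) hS3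
  have hS3n : Summable fun p : ℕ × ℕ => ‖e (p.1 + p.2) • V p.1 p.2‖ :=
    hS3V.congr (fun p => by rw [norm_smul, Real.norm_of_nonneg (he_nonneg _)])
  have hS3s : Summable fun p : ℕ × ℕ => e (p.1 + p.2) • V p.1 p.2 := hS3n.of_norm
  -- the scalar integral
  have hscal : ∀ l k : ℕ, (∫ s in Set.Ioc (0:ℝ) t,
      (Real.Gamma ((l : ℝ) * ρ + α) *
        Real.Gamma ((k : ℝ) * ρ + (n : ℝ) * α + α - γ))⁻¹ *
      ((t - s) ^ ((l : ℝ) * ρ + α - 1) *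
        s ^ ((k : ℝ) * ρ + (n : ℝ) * α + α - γ - 1))) = e (l + k) := by
    intro l k
    rw [← intervalIntegral.integral_of_le ht.le, intervalIntegral.integral_const_mul,
      beta_conv (ha0 l) (hb0 k) ht,
      show ((l : ℝ) * ρ + α) + ((k : ℝ) * ρ + (n : ℝ) * α + α - γ)
        = ((l + k : ℕ) : ℝ) * ρ + (n : ℝ) * α + 2 * α - γ by push_cast; ring]
    simp only [he_def]
    have h1 := (hΓa l).ne'
    have h2 := (hΓb k).ne'
    have h3 := (hΓe (l + k)).ne'
    field_simp
    rw [div_mul_cancel_left₀ (by rw [show ρ * (k:ℝ) + α * n + α - γ = k * ρ + n * α + α - γ by ring]; exact h2), one_div]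
  have hFint : ∀ p : ℕ × ℕ, IntervalIntegrable (F p) volume 0 t := by
    intro p
    have h1 := (intervalIntegrable_conv (ha0 p.1) (hb0 p.2) ht).const_mul
      ((Real.Gamma ((p.1 : ℝ) * ρ + α) *
        Real.Gamma ((p.2 : ℝ) * ρ + (n : ℝ) * α + α - γ))⁻¹)
    simp only [hF_def]
    exact ⟨h1.1.smul_const _, h1.2.smul_const _⟩
  have hFval : ∀ p : ℕ × ℕ, (∫ s in Set.Ioc (0:ℝ) t, F p s) = e (p.1 + p.2) • V p.1 p.2 := by
    intro p
    simp only [hF_def]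
    rw [integral_smul_const, hscal p.1 p.2]
  have hFnorm : ∀ p : ℕ × ℕ,
      (∫ s in Set.Ioc (0:ℝ) t, ‖F p s‖) = e (p.1 + p.2) * ‖V p.1 p.2‖ := by
    intro p
    have h1 : Set.EqOn (fun s => ‖F p s‖)
        (fun s => ((Real.Gamma ((p.1 : ℝ) * ρ + α) *
            Real.Gamma ((p.2 : ℝ) * ρ + (n : ℝ) * α + α - γ))⁻¹ *
          ((t - s) ^ ((p.1 : ℝ) * ρ + α - 1) *
            s ^ ((p.2 : ℝ) * ρ + (n : ℝ) * α + α - γ - 1))) * ‖V p.1 p.2‖)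
        (Set.Ioc 0 t) := by
      intro s hs
      simp only [hF_def]
      rw [norm_smul, Real.norm_of_nonneg]
      exact mul_nonneg
        (inv_nonneg.2 (mul_nonneg (hΓa p.1).le (hΓb p.2).le))
        (mul_nonneg (Real.rpow_nonneg (by linarith [hs.2]) _)
          (Real.rpow_nonneg hs.1.le _))
    rw [setIntegral_congr_fun measurableSet_Ioc h1, integral_mul_const, hscal p.1 p.2]
  have hFsum : Summable fun p : ℕ × ℕ => ∫ s in Set.Ioc (0:ℝ) t, ‖F p s‖ :=
    hS3V.congr (fun p => (hFnorm p).symm)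
  -- pointwise expansion of the integrand on Ioo 0 t
  have hpt : Set.EqOn
      (fun s => ((t - s) ^ (α - 1)) • (mlTwo ρ α (((t - s) ^ ρ) • A) * B * f n s))
      (fun s => ∑' p : ℕ × ℕ, F p s) (Set.Ioo 0 t) := by
    intro s hs
    have hs0 : (0:ℝ) < s := hs.1
    have hu : (0:ℝ) < t - s := by linarith [hs.2]
    have hts : ∀ m : ℕ, ((t - s) ^ ρ) ^ m = (t - s) ^ ((m : ℝ) * ρ) := by
      intro m
      rw [← Real.rpow_natCast ((t - s) ^ ρ) m, ← Real.rpow_mul hu.le, mul_comm]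
    have hss : ∀ m : ℕ, (s ^ ρ) ^ m = s ^ ((m : ℝ) * ρ) := by
      intro m
      rw [← Real.rpow_natCast (s ^ ρ) m, ← Real.rpow_mul hs0.le, mul_comm]
    set x : ℕ → 𝔸 := fun l =>
      ((t - s) ^ ((l : ℝ) * ρ) / Real.Gamma ((l : ℝ) * ρ + α)) • A ^ l with hx_def
    set y : ℕ → 𝔸 := fun k =>
      (s ^ ((k : ℝ) * ρ + (n : ℝ) * α + α - γ - 1) /
        Real.Gamma ((k : ℝ) * ρ + (n : ℝ) * α + α - γ)) • (B * Q A B k n) with hy_def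
    have hxn : Summable fun l => ‖x l‖ := by
      apply Summable.of_nonneg_of_le (fun l => norm_nonneg _) (fun l => ?_)
        ((summable_pow_div_Gamma (x := (t - s) ^ ρ * (‖A‖ + 1)) hρ hα (by positivity) 0).mul_left N)
      simp only [hx_def]
      rw [norm_smul, Real.norm_of_nonneg (div_nonneg (Real.rpow_nonneg hu.le _) (hΓa l).le)]
      calc (t - s) ^ ((l : ℝ) * ρ) / Real.Gamma ((l : ℝ) * ρ + α) * ‖A ^ l‖
          ≤ (t - s) ^ ((l : ℝ) * ρ) / Real.Gamma ((l : ℝ) * ρ + α) * (N * (‖A‖ + 1) ^ l) := by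
            apply mul_le_mul_of_nonneg_left _
              (div_nonneg (Real.rpow_nonneg hu.le _) (hΓa l).le)
            rw [hN_def]
            exact norm_pow_le_max A l
        _ = N * (((l : ℝ) + 1) ^ 0 * ((t - s) ^ ρ * (‖A‖ + 1)) ^ l /
              Real.Gamma ((l : ℝ) * ρ + α)) := by
            rw [pow_zero, one_mul, mul_pow, hts l]
            ring
    have hqn : Summable fun k : ℕ =>
        ‖(s ^ ((k : ℝ) * ρ + (n : ℝ) * α + α - γ - 1) /
            Real.Gamma ((k : ℝ) * ρ + (n : ℝ) * α + α - γ)) • Q A B k n‖ := by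
      have hbase : Summable fun k : ℕ =>
          (N * ‖B‖ ^ n * s ^ ((n : ℝ) * α + α - γ - 1)) *
            (((k : ℝ) + 1) ^ n * (s ^ ρ * (‖A‖ + 1)) ^ k /
              Real.Gamma ((k : ℝ) * ρ + (n : ℝ) * α + α - γ)) := by
        apply Summable.mul_left
        apply (summable_pow_div_Gamma (x := s ^ ρ * (‖A‖ + 1)) hρ
          (show (0:ℝ) < (n : ℝ) * α + α - γ by linarith) (by positivity) n).congr
        intro k
        rw [show (k : ℝ) * ρ + ((n : ℝ) * α + α - γ)
          = (k : ℝ) * ρ + (n : ℝ) * α + α - γ by ring]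
      apply Summable.of_nonneg_of_le (fun k => norm_nonneg _) (fun k => ?_) hbase
      rw [norm_smul, Real.norm_of_nonneg (div_nonneg (Real.rpow_nonneg hs0.le _) (hΓb k).le)]
      have hsE : s ^ ((k : ℝ) * ρ + (n : ℝ) * α + α - γ - 1)
          = (s ^ ρ) ^ k * s ^ ((n : ℝ) * α + α - γ - 1) := by
        rw [hss k, ← Real.rpow_add hs0]
        congr 1
        ring
      calc s ^ ((k : ℝ) * ρ + (n : ℝ) * α + α - γ - 1) /
            Real.Gamma ((k : ℝ) * ρ + (n : ℝ) * α + α - γ) * ‖Q A B k n‖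
          ≤ s ^ ((k : ℝ) * ρ + (n : ℝ) * α + α - γ - 1) /
              Real.Gamma ((k : ℝ) * ρ + (n : ℝ) * α + α - γ) *
              (N * ((k : ℝ) + 1) ^ n * (‖A‖ + 1) ^ k * ‖B‖ ^ n) := by
            apply mul_le_mul_of_nonneg_left _
              (div_nonneg (Real.rpow_nonneg hs0.le _) (hΓb k).le)
            rw [hN_def]
            exact norm_Q_le A B k n
        _ = (N * ‖B‖ ^ n * s ^ ((n : ℝ) * α + α - γ - 1)) *
              (((k : ℝ) + 1) ^ n * (s ^ ρ * (‖A‖ + 1)) ^ k /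
                Real.Gamma ((k : ℝ) * ρ + (n : ℝ) * α + α - γ)) := by
            rw [hsE, mul_pow]
            ring
    have hqs : Summable fun k : ℕ =>
        (s ^ ((k : ℝ) * ρ + (n : ℝ) * α + α - γ - 1) /
          Real.Gamma ((k : ℝ) * ρ + (n : ℝ) * α + α - γ)) • Q A B k n := hqn.of_norm
    have hyn : Summable fun k => ‖y k‖ := by
      apply Summable.of_nonneg_of_le (fun k => norm_nonneg _) (fun k => ?_) (hqn.mul_left ‖B‖)
      simp only [hy_def]
      rw [← mul_smul_comm]
      exact norm_mul_le _ _
    have hml : mlTwo ρ α (((t - s) ^ ρ) • A) = ∑' l, x l := by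
      rw [mlTwo]
      apply tsum_congr
      intro l
      rw [smul_pow, hts l, smul_smul]
      simp only [hx_def]
      congr 1
      rw [inv_mul_eq_div]
    have hBf : B * (∑' k : ℕ, (s ^ ((k : ℝ) * ρ + (n : ℝ) * α + α - γ - 1) /
        Real.Gamma ((k : ℝ) * ρ + (n : ℝ) * α + α - γ)) • Q A B k n) = ∑' k, y k := by
      rw [← Summable.tsum_mul_left B hqs]
      apply tsum_congr
      intro k
      simp only [hy_def]
      rw [mul_smul_comm]
    simp only
    rw [mul_assoc, hf n s, hBf, hml, tsum_mul_tsum_of_summable_norm hxn hyn,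
      ← Summable.tsum_const_smul ((t - s) ^ (α - 1)) (summable_mul_of_summable_norm hxn hyn)]
    apply tsum_congr
    rintro ⟨l, k⟩
    simp only [hx_def, hy_def, hF_def]
    rw [smul_mul_assoc, mul_smul_comm, smul_smul, smul_smul]
    congr 1
    rw [show (l : ℝ) * ρ + α - 1 = (l : ℝ) * ρ + (α - 1) by ring, Real.rpow_add hu]
    ring
  -- diagonal regrouping
  have hQd : ∀ j : ℕ, (∑ q ∈ Finset.HasAntidiagonal.antidiagonal j, V q.1 q.2) = Q A B j (n + 1) := by
    intro j
    rw [Finset.Nat.sum_antidiagonal_eq_sum_range_succ_mk (fun q => V q.1 q.2) j]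
    have hQdef : Q A B j (n + 1) = ∑ l ∈ Finset.range (j + 1), A ^ (j - l) * B * Q A B l n := rfl
    rw [hQdef, ← Finset.sum_range_reflect (fun l => A ^ (j - l) * B * Q A B l n) (j + 1)]
    apply Finset.sum_congr rfl
    intro i hi
    have hij : i ≤ j := Nat.lt_succ_iff.mp (Finset.mem_range.mp hi)
    simp only [hV_def]
    rw [Nat.add_sub_cancel, Nat.sub_sub_self hij, mul_assoc]
  have hdiag : (∑' p : ℕ × ℕ, e (p.1 + p.2) • V p.1 p.2)
      = ∑' j : ℕ, e j • Q A B j (n + 1) := by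
    have hsig : Summable ((fun p : ℕ × ℕ => e (p.1 + p.2) • V p.1 p.2) ∘
        ⇑(Finset.HasAntidiagonal.sigmaAntidiagonalEquivProd (A := ℕ))) :=
      (Equiv.summable_iff _).mpr hS3s
    calc (∑' p : ℕ × ℕ, e (p.1 + p.2) • V p.1 p.2)
        = ∑' x : (Σ j : ℕ, {q : ℕ × ℕ // q ∈ Finset.HasAntidiagonal.antidiagonal j}),
            (fun p : ℕ × ℕ => e (p.1 + p.2) • V p.1 p.2)
              (Finset.HasAntidiagonal.sigmaAntidiagonalEquivProd x) :=
          ((Finset.HasAntidiagonal.sigmaAntidiagonalEquivProd).tsum_eq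
            (fun p : ℕ × ℕ => e (p.1 + p.2) • V p.1 p.2)).symm
      _ = ∑' (j : ℕ) (c : {q : ℕ × ℕ // q ∈ Finset.HasAntidiagonal.antidiagonal j}),
            (fun p : ℕ × ℕ => e (p.1 + p.2) • V p.1 p.2)
              (Finset.HasAntidiagonal.sigmaAntidiagonalEquivProd ⟨j, c⟩) := Summable.tsum_sigma hsig
      _ = ∑' j : ℕ, e j • Q A B j (n + 1) := by
          apply tsum_congr
          intro j
          calc (∑' c : {q : ℕ × ℕ // q ∈ Finset.HasAntidiagonal.antidiagonal j},
                (fun p : ℕ × ℕ => e (p.1 + p.2) • V p.1 p.2)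
                  (Finset.HasAntidiagonal.sigmaAntidiagonalEquivProd ⟨j, c⟩))
              = ∑ q ∈ Finset.HasAntidiagonal.antidiagonal j, e (q.1 + q.2) • V q.1 q.2 :=
                Finset.tsum_subtype (Finset.HasAntidiagonal.antidiagonal j)
                  (fun q => e (q.1 + q.2) • V q.1 q.2)
            _ = ∑ q ∈ Finset.HasAntidiagonal.antidiagonal j, e j • V q.1 q.2 :=
                Finset.sum_congr rfl
                  (fun q hq => by rw [Finset.HasAntidiagonal.mem_antidiagonal.mp hq])
            _ = e j • ∑ q ∈ Finset.HasAntidiagonal.antidiagonal j, V q.1 q.2 := (Finset.smul_sum).symm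
            _ = e j • Q A B j (n + 1) := by rw [hQd j]
  have hfinal : (∑' j : ℕ, e j • Q A B j (n + 1)) = f (n + 1) t := by
    rw [hf (n + 1) t]
    apply tsum_congr
    intro j
    congr 1
    simp only [he_def]
    rw [show (j : ℝ) * ρ + (n : ℝ) * α + 2 * α - γ
      = (j : ℝ) * ρ + ((n + 1 : ℕ) : ℝ) * α + α - γ by push_cast; ring]
  calc ∫ s in (0:ℝ)..t, ((t - s) ^ (α - 1)) • (mlTwo ρ α (((t - s) ^ ρ) • A) * B * f n s)
      = ∫ s in Set.Ioc (0:ℝ) t,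
          ((t - s) ^ (α - 1)) • (mlTwo ρ α (((t - s) ^ ρ) • A) * B * f n s) :=
        intervalIntegral.integral_of_le ht.le
    _ = ∫ s in Set.Ioo (0:ℝ) t,
          ((t - s) ^ (α - 1)) • (mlTwo ρ α (((t - s) ^ ρ) • A) * B * f n s) :=
        MeasureTheory.integral_Ioc_eq_integral_Ioo
    _ = ∫ s in Set.Ioo (0:ℝ) t, ∑' p : ℕ × ℕ, F p s :=
        setIntegral_congr_fun measurableSet_Ioo hpt
    _ = ∫ s in Set.Ioc (0:ℝ) t, ∑' p : ℕ × ℕ, F p s :=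
        MeasureTheory.integral_Ioc_eq_integral_Ioo.symm
    _ = ∑' p : ℕ × ℕ, ∫ s in Set.Ioc (0:ℝ) t, F p s :=
        (integral_tsum_of_summable_integral_norm
          (fun p => (intervalIntegrable_iff_integrableOn_Ioc_of_le ht.le).mp (hFint p))
          hFsum).symm
    _ = ∑' p : ℕ × ℕ, e (p.1 + p.2) • V p.1 p.2 := tsum_congr hFval
    _ = ∑' j : ℕ, e j • Q A B j (n + 1) := hdiag
    _ = f (n + 1) t := hfinal
end

section
/- Let A, B be elements of a Banach algebra with identity I, let α > β > 0 and γ < α be real, let m ∈ ℕ, and let s > 0 be real with s^{α−β} > ‖A‖ (so that s^{α−β}I − A is invertible). Then the Bochner integral over (0,∞) satisfies ∫₀^∞ e^{−st} [ ∑_{k=0}^∞ Q_{k,m}^{A,B} t^{k(α−β)+mα+α−γ−1} / Γ(k(α−β)+mα+α−γ) ] dt = s^{γ−(m+1)β} · ((s^{α−β}I − A)^{−1} B)^{m} · (s^{α−β}I − A)^{−1}. -/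
open MeasureTheory

lemma Q_key {𝔸 : Type*} [NormedRing 𝔸] [NormOneClass 𝔸] [NormedAlgebra ℝ 𝔸]
    [CompleteSpace 𝔸] (A B : 𝔸) (x : ℝ) (hx : ‖x • A‖ < 1) (m : ℕ) :
    Summable (fun k => ‖x ^ k • Q A B k m‖) ∧
      ∑' k, x ^ k • Q A B k m =
        (Ring.inverse (1 - x • A) * B) ^ m * Ring.inverse (1 - x • A) := by
  have hpt0 : ∀ k, x ^ k • Q A B k 0 = (x • A) ^ k := by
    intro k; rw [smul_pow]; rfl
  have hgeom : Summable fun j => ‖(x • A) ^ j‖ :=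
    (summable_geometric_of_lt_one (norm_nonneg _) hx).of_nonneg_of_le
      (fun _ => norm_nonneg _) (fun n => norm_pow_le _ n)
  induction m with
  | zero =>
    constructor
    · simpa only [hpt0] using hgeom
    · simp only [hpt0, pow_zero, one_mul]
      exact geom_series_eq_inverse _ hx
  | succ m ih =>
    set R := Ring.inverse (1 - x • A) with hR
    set h : ℕ → 𝔸 := fun l => x ^ l • (B * Q A B l m) with hh_def
    have hh : Summable fun l => ‖h l‖ := by
      refine (ih.1.mul_left ‖B‖).of_nonneg_of_le (fun _ => norm_nonneg _) fun l => ?_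
      simp only [hh_def, norm_smul]
      calc ‖x ^ l‖ * ‖B * Q A B l m‖ ≤ ‖x ^ l‖ * (‖B‖ * ‖Q A B l m‖) := by
            gcongr; exact norm_mul_le _ _
        _ = ‖B‖ * (‖x ^ l‖ * ‖Q A B l m‖) := by ring
    have hpt : ∀ n, x ^ n • Q A B n (m + 1) =
        ∑ kl ∈ Finset.HasAntidiagonal.antidiagonal n, (x • A) ^ kl.1 * h kl.2 := by
      intro n
      rw [Finset.Nat.sum_antidiagonal_eq_sum_range_succ
        (fun i j => (x • A) ^ i * h j) n]
      have : Q A B n (m + 1) = ∑ l ∈ Finset.range (n + 1), A ^ (n - l) * B * Q A B l m := rfl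
      rw [this, Finset.smul_sum]
      rw [← Finset.sum_range_reflect (fun l => x ^ n • (A ^ (n - l) * B * Q A B l m)) (n + 1)]
      refine Finset.sum_congr rfl fun j hj => ?_
      rw [Finset.mem_range] at hj
      have hj' : j ≤ n := Nat.lt_succ_iff.mp hj
      have h1 : n + 1 - 1 - j = n - j := by omega
      have h2 : n - (n - j) = j := by omega
      simp only [h1, h2, hh_def, smul_pow, smul_mul_assoc, mul_smul_comm, smul_smul]
      rw [← pow_add, Nat.sub_add_cancel hj', mul_assoc]
    constructor
    · refine (summable_norm_sum_mul_antidiagonal_of_summable_norm hgeom hh).congr fun n => ?_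
      rw [hpt n]
    · have hsum := tsum_mul_tsum_eq_tsum_sum_antidiagonal_of_summable_norm hgeom hh
      have hgeo_tsum : ∑' j, (x • A) ^ j = R := geom_series_eq_inverse _ hx
      have hh_tsum : ∑' l, h l = B * ((R * B) ^ m * R) := by
        simp only [hh_def, ← mul_smul_comm]
        rw [Summable.tsum_mul_left B ih.1.of_norm, ih.2]
      calc ∑' n, x ^ n • Q A B n (m + 1)
          = ∑' n, ∑ kl ∈ Finset.HasAntidiagonal.antidiagonal n, (x • A) ^ kl.1 * h kl.2 := by
            exact tsum_congr hpt
        _ = (∑' j, (x • A) ^ j) * ∑' l, h l := hsum.symm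
        _ = R * (B * ((R * B) ^ m * R)) := by rw [hgeo_tsum, hh_tsum]
        _ = (R * B) ^ (m + 1) * R := by
            rw [pow_succ']; simp only [mul_assoc]

/-- Laplace transform identity (Lemma 3.2 of the paper): for `s^{α−β} > ‖A‖`,
`s^{α−β}I − A` is invertible and
`∫₀^∞ e^{−st} ∑_k Q_{k,m}^{A,B} t^{k(α−β)+mα+α−γ−1}/Γ(k(α−β)+mα+α−γ) dt
  = s^{γ−(m+1)β} ((s^{α−β}I − A)^{−1} B)^m (s^{α−β}I − A)^{−1}`. -/
theorem laplace_Q_series {𝔸 : Type*} [NormedRing 𝔸] [NormOneClass 𝔸] [NormedAlgebra ℝ 𝔸]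
    [CompleteSpace 𝔸] (A B : 𝔸) (α β γ : ℝ) (hβ : 0 < β) (hαβ : β < α) (hγ : γ < α)
    (m : ℕ) (s : ℝ) (hs : 0 < s) (hA : ‖A‖ < s ^ (α - β)) :
    IsUnit (s ^ (α - β) • (1 : 𝔸) - A) ∧
    ∫ t in Set.Ioi (0 : ℝ), Real.exp (-(s * t)) •
        (∑' k : ℕ, (t ^ ((k : ℝ) * (α - β) + (m : ℝ) * α + α - γ - 1) /
          Real.Gamma ((k : ℝ) * (α - β) + (m : ℝ) * α + α - γ)) • Q A B k m)
      = (s ^ (γ - ((m : ℝ) + 1) * β)) •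
          ((Ring.inverse (s ^ (α - β) • (1 : 𝔸) - A) * B) ^ m *
            Ring.inverse (s ^ (α - β) • (1 : 𝔸) - A)) := by
  set c : ℝ := s ^ (α - β) with hc_def
  have hc : 0 < c := Real.rpow_pos_of_pos hs _
  set x : ℝ := c⁻¹ with hx_def
  have hx0 : 0 < x := inv_pos.mpr hc
  have hxc : x * c = 1 := inv_mul_cancel₀ hc.ne'
  have hxA : ‖x • A‖ < 1 := by
    rw [norm_smul, Real.norm_eq_abs, abs_of_pos hx0]
    calc x * ‖A‖ < x * c := by gcongr
      _ = 1 := hxc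
  have hQ := Q_key A B x hxA m
  set R : 𝔸 := Ring.inverse (1 - x • A) with hR_def
  have hRmul : (1 - x • A) * R = 1 :=
    Ring.mul_inverse_cancel _ (isUnit_one_sub_of_norm_lt_one hxA)
  have hmulR : R * (1 - x • A) = 1 :=
    Ring.inverse_mul_cancel _ (isUnit_one_sub_of_norm_lt_one hxA)
  have hca : c • ((1 : 𝔸) - x • A) = c • (1 : 𝔸) - A := by
    rw [smul_sub, smul_smul, mul_inv_cancel₀ hc.ne', one_smul]
  have hu1 : (c • (1 : 𝔸) - A) * (x • R) = 1 := by
    rw [← hca, smul_mul_assoc, mul_smul_comm, smul_smul, mul_comm c x, hxc, one_smul, hRmul]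
  have hu2 : (x • R) * (c • (1 : 𝔸) - A) = 1 := by
    rw [← hca, smul_mul_assoc, mul_smul_comm, smul_smul, mul_comm x c, mul_comm c x, hxc,
      one_smul, hmulR]
  set u : 𝔸ˣ := ⟨c • (1 : 𝔸) - A, x • R, hu1, hu2⟩ with hu_def
  have hunit : IsUnit (c • (1 : 𝔸) - A) := ⟨u, rfl⟩
  have hinv : Ring.inverse (c • (1 : 𝔸) - A) = x • R := Ring.inverse_unit u
  refine ⟨hunit, ?_⟩
  -- the positive exponents
  have hr : ∀ k : ℕ, 0 < (k : ℝ) * (α - β) + (m : ℝ) * α + α - γ := by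
    intro k
    have h1 : (0 : ℝ) ≤ (k : ℝ) * (α - β) :=
      mul_nonneg (Nat.cast_nonneg k) (by linarith)
    have h2 : (0 : ℝ) ≤ (m : ℝ) * α := mul_nonneg (Nat.cast_nonneg m) (by linarith)
    linarith
  have hGamma : ∀ k : ℕ, 0 < Real.Gamma ((k : ℝ) * (α - β) + (m : ℝ) * α + α - γ) :=
    fun k => Real.Gamma_pos_of_pos (hr k)
  set F : ℕ → ℝ → 𝔸 := fun k t =>
    ((t ^ ((k : ℝ) * (α - β) + (m : ℝ) * α + α - γ - 1) * Real.exp (-(s * t))) /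
      Real.Gamma ((k : ℝ) * (α - β) + (m : ℝ) * α + α - γ)) • Q A B k m with hF_def
  have hInt_scalar : ∀ k : ℕ, IntegrableOn
      (fun t : ℝ => t ^ ((k : ℝ) * (α - β) + (m : ℝ) * α + α - γ - 1) * Real.exp (-(s * t)))
      (Set.Ioi 0) := by
    intro k
    have := integrableOn_rpow_mul_exp_neg_mul_rpow
      (by linarith [hr k] : (-1 : ℝ) < (k : ℝ) * (α - β) + (m : ℝ) * α + α - γ - 1)
      (one_pos : (0 : ℝ) < 1) hs
    simpa [Real.rpow_one, neg_mul] using this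
  have hIval : ∀ k : ℕ, ∫ t in Set.Ioi (0 : ℝ),
      t ^ ((k : ℝ) * (α - β) + (m : ℝ) * α + α - γ - 1) * Real.exp (-(s * t))
      = (1 / s) ^ ((k : ℝ) * (α - β) + (m : ℝ) * α + α - γ) *
        Real.Gamma ((k : ℝ) * (α - β) + (m : ℝ) * α + α - γ) :=
    fun k => Real.integral_rpow_mul_exp_neg_mul_Ioi (hr k) hs
  have hFint : ∀ k : ℕ, Integrable (F k) (volume.restrict (Set.Ioi 0)) := by
    intro k
    exact ((hInt_scalar k).div_const _).smul_const _
  have hintF : ∀ k : ℕ, ∫ t in Set.Ioi (0 : ℝ), F k t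
      = ((1 / s) ^ ((k : ℝ) * (α - β) + (m : ℝ) * α + α - γ)) • Q A B k m := by
    intro k
    rw [hF_def]
    rw [integral_smul_const]
    congr 1
    rw [integral_div, hIval k, mul_div_assoc, div_self (hGamma k).ne', mul_one]
  have hintFnorm : ∀ k : ℕ, ∫ t in Set.Ioi (0 : ℝ), ‖F k t‖
      = (1 / s) ^ ((k : ℝ) * (α - β) + (m : ℝ) * α + α - γ) * ‖Q A B k m‖ := by
    intro k
    have heq : ∀ t ∈ Set.Ioi (0 : ℝ), ‖F k t‖ =
        ((t ^ ((k : ℝ) * (α - β) + (m : ℝ) * α + α - γ - 1) * Real.exp (-(s * t))) /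
          Real.Gamma ((k : ℝ) * (α - β) + (m : ℝ) * α + α - γ)) * ‖Q A B k m‖ := by
      intro t ht
      have ht' : (0 : ℝ) < t := ht
      have hG := hGamma k
      rw [hF_def, norm_smul, Real.norm_eq_abs, abs_of_nonneg (by positivity)]
    rw [setIntegral_congr_fun measurableSet_Ioi heq, integral_mul_const, integral_div,
      hIval k, mul_div_assoc, div_self (hGamma k).ne', mul_one]
  have hpow : ∀ k : ℕ, (1 / s : ℝ) ^ ((k : ℝ) * (α - β) + (m : ℝ) * α + α - γ)
      = s ^ (γ - ((m : ℝ) + 1) * α) * x ^ k := by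
    intro k
    rw [one_div, Real.inv_rpow hs.le, ← Real.rpow_neg hs.le,
      show -((k : ℝ) * (α - β) + (m : ℝ) * α + α - γ)
        = (γ - ((m : ℝ) + 1) * α) + (-(α - β)) * (k : ℝ) by ring,
      Real.rpow_add hs, Real.rpow_mul hs.le, Real.rpow_natCast]
    congr 2
    rw [Real.rpow_neg hs.le, hx_def, hc_def]
  have hSum : Summable fun k : ℕ => ∫ t in Set.Ioi (0 : ℝ), ‖F k t‖ := by
    refine ((hQ.1.mul_left (s ^ (γ - ((m : ℝ) + 1) * α))).congr fun k => ?_)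
    rw [hintFnorm k, hpow k, norm_smul, Real.norm_eq_abs, abs_of_pos (pow_pos hx0 k)]
    ring
  have hpt : ∀ t : ℝ, Real.exp (-(s * t)) •
      (∑' k : ℕ, (t ^ ((k : ℝ) * (α - β) + (m : ℝ) * α + α - γ - 1) /
        Real.Gamma ((k : ℝ) * (α - β) + (m : ℝ) * α + α - γ)) • Q A B k m)
      = ∑' k : ℕ, F k t := by
    intro t
    rw [← tsum_const_smul'' (Real.exp (-(s * t)))]
    refine tsum_congr fun k => ?_
    rw [hF_def, smul_smul]
    congr 1
    ring
  calc ∫ t in Set.Ioi (0 : ℝ), Real.exp (-(s * t)) •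
        (∑' k : ℕ, (t ^ ((k : ℝ) * (α - β) + (m : ℝ) * α + α - γ - 1) /
          Real.Gamma ((k : ℝ) * (α - β) + (m : ℝ) * α + α - γ)) • Q A B k m)
      = ∫ t in Set.Ioi (0 : ℝ), ∑' k : ℕ, F k t :=
        setIntegral_congr_fun measurableSet_Ioi (fun t _ => hpt t)
    _ = ∑' k : ℕ, ∫ t in Set.Ioi (0 : ℝ), F k t :=
        (integral_tsum_of_summable_integral_norm hFint hSum).symm
    _ = ∑' k : ℕ, (s ^ (γ - ((m : ℝ) + 1) * α)) • (x ^ k • Q A B k m) := by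
        refine tsum_congr fun k => ?_
        rw [hintF k, hpow k, mul_smul]
    _ = (s ^ (γ - ((m : ℝ) + 1) * α)) • ∑' k : ℕ, x ^ k • Q A B k m :=
        tsum_const_smul'' _
    _ = (s ^ (γ - ((m : ℝ) + 1) * α)) • ((R * B) ^ m * R) := by rw [hQ.2]
    _ = (s ^ (γ - ((m : ℝ) + 1) * β)) •
          ((Ring.inverse (c • (1 : 𝔸) - A) * B) ^ m * Ring.inverse (c • (1 : 𝔸) - A)) := by
        rw [hinv, smul_mul_assoc, smul_pow, smul_mul_assoc, mul_smul_comm, smul_smul, smul_smul]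
        congr 1
        have hx1 : x = s ^ (-(α - β)) := by rw [hx_def, hc_def, ← Real.rpow_neg hs.le]
        have hxpow : x ^ m = s ^ (-(α - β) * (m : ℝ)) := by
          rw [hx1, ← Real.rpow_natCast (s ^ (-(α - β))) m, ← Real.rpow_mul hs.le]
        rw [hxpow, hx1, ← Real.rpow_add hs, ← Real.rpow_add hs]
        congr 1
        ring
end

section
/- Let A, B be elements of a Banach algebra with identity I satisfying AB = BA, let α > β > 0 be real, let m ∈ ℕ, let γ < (m+1)α be real, and let s > 0 be real with s^{α−β} > ‖A‖ (so that s^{α}I − A s^{β} is invertible). Then the Bochner integral over (0,∞) satisfies ∫₀^∞ e^{−st} t^{(m+1)α−γ−1} E_{α−β,(m+1)α−γ}^{m+1}(A t^{α−β}) B^{m} dt = s^{γ} B^{m} ((s^{α}I − A s^{β})^{−1})^{m+1}. -/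
open MeasureTheory

/-- The operator-valued three-parameter (Prabhakar) Mittag-Leffler function
`E_{a,c}^{m+1}(T) = ∑_{k=0}^∞ C(k+m, m) T^k / Γ(ka+c)`. -/
noncomputable def mlThree {𝔸 : Type*} [NormedRing 𝔸] [NormedAlgebra ℝ 𝔸]
    (a c : ℝ) (m : ℕ) (T : 𝔸) : 𝔸 :=
  ∑' k : ℕ, (((k + m).choose m : ℝ) / Real.Gamma ((k : ℝ) * a + c)) • T ^ k

open Filter Real Nat

lemma gammaGrowth {a c : ℝ} (ha : 0 < a) (hc : 0 < c) (Q : ℝ) (hQ : 1 ≤ Q) :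
    Tendsto (fun k : ℕ => Q ^ k / Real.Gamma ((k : ℝ) * a + c)) atTop (nhds 0) := by
  set m' : ℕ := ⌈2 / a⌉₊ with hm'
  have hm'2 : 2 / a ≤ (m' : ℝ) := Nat.le_ceil _
  set ν : ℕ → ℕ := fun k => ⌊(k : ℝ) * a + c⌋₊ - 1 with hν
  have hx : Tendsto (fun k : ℕ => (k : ℝ) * a + c) atTop atTop :=
    (tendsto_natCast_atTop_atTop.atTop_mul_const ha).atTop_add tendsto_const_nhds
  -- eventual facts
  have hev3 : ∀ᶠ k : ℕ in atTop, 3 ≤ (k : ℝ) * a + c := hx.eventually_ge_atTop 3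
  have hνreal : ∀ᶠ k : ℕ in atTop, (k : ℝ) * a + c - 2 ≤ (ν k : ℝ) := by
    filter_upwards [hev3] with k hk
    have h1 : 1 ≤ ⌊(k : ℝ) * a + c⌋₊ := Nat.le_floor (by push_cast; linarith)
    have : (ν k : ℝ) = (⌊(k : ℝ) * a + c⌋₊ : ℝ) - 1 := by
      simp [hν]; push_cast [Nat.cast_sub h1]; ring
    rw [this]
    have := Nat.lt_floor_add_one ((k : ℝ) * a + c)
    linarith
  have hνtop : Tendsto ν atTop atTop := by
    rw [tendsto_atTop]
    intro b
    filter_upwards [hνreal.and ((hx.atTop_add (tendsto_const_nhds (x := (-2:ℝ)))).eventually_ge_atTop (b : ℝ))] with k hk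
    have : (b : ℝ) ≤ (ν k : ℝ) := le_trans hk.2 hk.1
    exact_mod_cast this
  -- squeeze
  have hcomp : Tendsto (fun k : ℕ => (Q ^ m') ^ (ν k) / (Nat.factorial (ν k) : ℝ)) atTop (nhds 0) :=
    (FloorSemiring.tendsto_pow_div_factorial_atTop (Q ^ m')).comp hνtop
  refine squeeze_zero' ?_ ?_ hcomp
  · filter_upwards with k
    have hΓ : 0 < Real.Gamma ((k : ℝ) * a + c) :=
      Real.Gamma_pos_of_pos (by positivity)
    positivity
  · have hka : ∀ᶠ k : ℕ in atTop, 2 * (2 - c) ≤ (k : ℝ) * a :=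
      (tendsto_natCast_atTop_atTop.atTop_mul_const ha).eventually_ge_atTop _
    filter_upwards [hev3, hνreal, hka] with k hk3 hkν hka
    have hΓpos : 0 < Real.Gamma ((k : ℝ) * a + c) := Real.Gamma_pos_of_pos (by positivity)
    -- Γ(ka+c) ≥ Nat.factorial (ν k)
    have hfloor1 : 1 ≤ ⌊(k : ℝ) * a + c⌋₊ := Nat.le_floor (by push_cast; linarith)
    have hfloor2 : (2 : ℝ) ≤ (⌊(k : ℝ) * a + c⌋₊ : ℝ) := by
      have : (ν k : ℝ) = (⌊(k : ℝ) * a + c⌋₊ : ℝ) - 1 := by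
        simp only [hν]; push_cast [Nat.cast_sub hfloor1]; ring
      linarith
    have hΓge : (Nat.factorial (ν k) : ℝ) ≤ Real.Gamma ((k : ℝ) * a + c) := by
      have hmono := Real.Gamma_strictMonoOn_Ici.monotoneOn
      have h1 : (⌊(k : ℝ) * a + c⌋₊ : ℝ) ≤ (k : ℝ) * a + c := Nat.floor_le (by positivity)
      have h2 : ((⌊(k : ℝ) * a + c⌋₊ : ℝ)) ∈ Set.Ici (2:ℝ) := hfloor2
      have h3 : ((k : ℝ) * a + c) ∈ Set.Ici (2:ℝ) := by simp; linarith
      have := hmono h2 h3 h1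
      have heq : Real.Gamma ((⌊(k : ℝ) * a + c⌋₊ : ℝ)) = (Nat.factorial (ν k) : ℝ) := by
        have hn : ν k + 1 = ⌊(k : ℝ) * a + c⌋₊ := by simp only [hν]; omega
        rw [← hn]
        push_cast
        exact Real.Gamma_nat_eq_factorial (ν k)
      rwa [heq] at this
    -- Q^k ≤ (Q^m')^(ν k)
    have hkle : (k : ℕ) ≤ m' * ν k := by
      have hν0 : (0:ℝ) ≤ (k : ℝ) * a / 2 := by positivity
      have hstep : (k : ℝ) * a / 2 ≤ (ν k : ℝ) := by linarith
      have : (2 / a) * ((k : ℝ) * a / 2) ≤ (m' : ℝ) * (ν k : ℝ) :=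
        mul_le_mul hm'2 hstep hν0 (le_trans (by positivity) hm'2)
      have heq : (2 / a) * ((k : ℝ) * a / 2) = (k : ℝ) := by field_simp
      rw [heq] at this
      exact_mod_cast this
    have hQpow : Q ^ k ≤ (Q ^ m') ^ (ν k) := by
      rw [← pow_mul]
      exact pow_le_pow_right₀ hQ hkle
    exact div_le_div₀ (by positivity) hQpow (by exact_mod_cast Nat.factorial_pos (ν k)) hΓge


lemma summable_prabhakar (m : ℕ) {a c : ℝ} (ha : 0 < a) (hc : 0 < c) {R : ℝ} (hR : 0 ≤ R) :
    Summable fun k : ℕ =>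
      ((k + m).choose m : ℝ) / Real.Gamma ((k : ℝ) * a + c) * R ^ k := by
  set Q : ℝ := 2 * ((2:ℝ) ^ m * R + 1) with hQdef
  have hQ1 : 1 ≤ Q := by
    have : (0:ℝ) ≤ (2:ℝ) ^ m * R := by positivity
    simp only [hQdef]; nlinarith
  have htend := gammaGrowth ha hc Q hQ1
  have hev : ∀ᶠ k : ℕ in atTop, Q ^ k / Real.Gamma ((k : ℝ) * a + c) ≤ 1 :=
    htend.eventually (eventually_le_nhds one_pos)
  have hbound : ∀ᶠ k : ℕ in atTop,
      ‖((k + m).choose m : ℝ) / Real.Gamma ((k : ℝ) * a + c) * R ^ k‖ ≤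
        ((m:ℝ) + 1) ^ m * ‖((1:ℝ)/2) ^ k‖ := by
    filter_upwards [hev] with k hk
    have hΓ : 0 < Real.Gamma ((k : ℝ) * a + c) := Real.Gamma_pos_of_pos (by positivity)
    have hterm0 : 0 ≤ ((k + m).choose m : ℝ) / Real.Gamma ((k : ℝ) * a + c) * R ^ k := by
      positivity
    rw [Real.norm_of_nonneg hterm0, Real.norm_of_nonneg (by positivity)]
    -- choose bound : C(k+m, m) ≤ (m+1)^m * (2^m)^k
    have hchoose : ((k + m).choose m : ℝ) ≤ ((m:ℝ) + 1) ^ m * ((2:ℝ) ^ m) ^ k := by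
      have h1 : ((k + m).choose m : ℝ) ≤ ((k + m : ℕ) : ℝ) ^ m := by
        exact_mod_cast Nat.choose_le_pow (k + m) m
      have hk2 : (k : ℝ) + 1 ≤ 2 ^ k := by exact_mod_cast Nat.succ_le_of_lt (Nat.lt_two_pow_self (n := k))
      have h3 : ((k + m : ℕ) : ℝ) ≤ ((m:ℝ) + 1) * ((k:ℝ) + 1) := by
        push_cast
        nlinarith [Nat.cast_nonneg (α := ℝ) k, Nat.cast_nonneg (α := ℝ) m]
      calc ((k + m).choose m : ℝ) ≤ ((k + m : ℕ) : ℝ) ^ m := h1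
        _ ≤ (((m:ℝ) + 1) * (2 ^ k)) ^ m := by
            refine pow_le_pow_left₀ (Nat.cast_nonneg _) (h3.trans ?_) m
            have hm1 : (0:ℝ) ≤ (m:ℝ) + 1 := by positivity
            exact mul_le_mul_of_nonneg_left hk2 hm1
        _ = ((m:ℝ) + 1) ^ m * ((2:ℝ) ^ m) ^ k := by
            rw [mul_pow, ← pow_mul, ← pow_mul, Nat.mul_comm k m]
    have h2R : (0:ℝ) ≤ (2:ℝ) ^ m * R := by positivity
    have hQ2 : (2:ℝ) ^ m * R ≤ Q / 2 := by simp only [hQdef]; linarith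
    calc ((k + m).choose m : ℝ) / Real.Gamma ((k : ℝ) * a + c) * R ^ k
        ≤ (((m:ℝ) + 1) ^ m * ((2:ℝ) ^ m) ^ k) / Real.Gamma ((k : ℝ) * a + c) * R ^ k := by
          gcongr
      _ = ((m:ℝ) + 1) ^ m * (((2:ℝ) ^ m * R) ^ k / Real.Gamma ((k : ℝ) * a + c)) := by
          rw [mul_pow]; ring
      _ ≤ ((m:ℝ) + 1) ^ m * ((Q / 2) ^ k / Real.Gamma ((k : ℝ) * a + c)) := by
          gcongr
      _ = ((m:ℝ) + 1) ^ m * ((1/2) ^ k * (Q ^ k / Real.Gamma ((k : ℝ) * a + c))) := by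
          rw [div_pow, div_pow]; ring
      _ ≤ ((m:ℝ) + 1) ^ m * ((1/2) ^ k * 1) := by
          gcongr
      _ = ((m:ℝ) + 1) ^ m * (1/2) ^ k := by ring
  refine summable_of_isBigO_nat (summable_geometric_of_lt_one (by norm_num) (by norm_num : (1/2:ℝ) < 1)) ?_
  exact Asymptotics.IsBigO.of_bound _ hbound

section GeomPow
variable {𝔸 : Type*} [NormedRing 𝔸] [NormedAlgebra ℝ 𝔸] [CompleteSpace 𝔸]

lemma geomPow {x : 𝔸} (hx : ‖x‖ < 1) (m : ℕ) :
    (Summable fun k : ℕ => ‖(((k + m).choose m : ℝ)) • x ^ k‖) ∧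
      ∑' k : ℕ, (((k + m).choose m : ℝ)) • x ^ k = (Ring.inverse (1 - x)) ^ (m + 1) := by
  induction m with
  | zero =>
      simp only [Nat.add_zero, Nat.choose_zero_right, Nat.cast_one, one_smul, pow_one]
      refine ⟨summable_norm_geometric_of_norm_lt_one hx, ?_⟩
      rw [zero_add, pow_one]
      exact geom_series_eq_inverse x hx
  | succ m ih =>
      obtain ⟨hfs, hft⟩ := ih
      have hgs : Summable fun k : ℕ => ‖x ^ k‖ := summable_norm_geometric_of_norm_lt_one hx
      have hgt : ∑' k : ℕ, x ^ k = Ring.inverse (1 - x) := geom_series_eq_inverse x hx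
      -- key finset identity
      have key : ∀ n : ℕ, (∑ kl ∈ Finset.HasAntidiagonal.antidiagonal n,
            ((((kl.1 + m).choose m : ℝ)) • x ^ kl.1) * x ^ kl.2)
          = (((n + (m + 1)).choose (m + 1) : ℝ)) • x ^ n := by
        intro n
        rw [Finset.Nat.sum_antidiagonal_eq_sum_range_succ_mk]
        have hterm : ∀ i ∈ Finset.range (n + 1),
            ((((i + m).choose m : ℝ)) • x ^ i) * x ^ (n - i)
              = (((i + m).choose m : ℝ)) • x ^ n := by
          intro i hi
          have hi' := Finset.mem_range.mp hi
          rw [smul_mul_assoc, ← pow_add]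
          congr 2
          omega
        rw [Finset.sum_congr rfl hterm, ← Finset.sum_smul]
        congr 1
        have hIcc := Nat.sum_range_add_choose n m
        have : ∑ i ∈ Finset.range (n + 1), ((i + m).choose m : ℝ)
            = ((∑ i ∈ Finset.range (n + 1), (i + m).choose m : ℕ) : ℝ) := by
          push_cast; rfl
        rw [this, hIcc]
        norm_num [Nat.add_assoc]
      have hsum2 : Summable fun n : ℕ => ‖(((n + (m + 1)).choose (m + 1) : ℝ)) • x ^ n‖ := by
        have := summable_norm_sum_mul_antidiagonal_of_summable_norm hfs hgs
        simpa only [key] using this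
      refine ⟨hsum2, ?_⟩
      have hprod := tsum_mul_tsum_eq_tsum_sum_antidiagonal_of_summable_norm hfs hgs
      calc ∑' k : ℕ, (((k + (m + 1)).choose (m + 1) : ℝ)) • x ^ k
          = ∑' n : ℕ, ∑ kl ∈ Finset.HasAntidiagonal.antidiagonal n,
              ((((kl.1 + m).choose m : ℝ)) • x ^ kl.1) * x ^ kl.2 := by
            exact tsum_congr fun n => (key n).symm
        _ = (∑' k : ℕ, (((k + m).choose m : ℝ)) • x ^ k) * ∑' k : ℕ, x ^ k := hprod.symm
        _ = (Ring.inverse (1 - x)) ^ (m + 1) * Ring.inverse (1 - x) := by rw [hft, hgt]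
        _ = (Ring.inverse (1 - x)) ^ (m + 1 + 1) := by rw [← pow_succ]

end GeomPow

/-- Laplace transform identity (Theorem 4.1 of the paper): for commuting `A`, `B` and
`s^{α−β} > ‖A‖`, `s^α I − A s^β` is invertible and
`∫₀^∞ e^{−st} t^{(m+1)α−γ−1} E_{α−β,(m+1)α−γ}^{m+1}(A t^{α−β}) B^m dt
  = s^γ B^m ((s^α I − A s^β)^{−1})^{m+1}`. -/
theorem laplace_mlThree {𝔸 : Type*} [NormedRing 𝔸] [NormOneClass 𝔸] [NormedAlgebra ℝ 𝔸]
    [CompleteSpace 𝔸] (A B : 𝔸) (hAB : A * B = B * A) (α β : ℝ) (hβ : 0 < β) (hαβ : β < α)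
    (m : ℕ) (γ : ℝ) (hγ : γ < ((m : ℝ) + 1) * α) (s : ℝ) (hs : 0 < s)
    (hA : ‖A‖ < s ^ (α - β)) :
    IsUnit (s ^ α • (1 : 𝔸) - s ^ β • A) ∧
    ∫ t in Set.Ioi (0 : ℝ), Real.exp (-(s * t)) •
        ((t ^ (((m : ℝ) + 1) * α - γ - 1)) •
          (mlThree (α - β) (((m : ℝ) + 1) * α - γ) m ((t ^ (α - β)) • A) * B ^ m))
      = (s ^ γ) • (B ^ m * (Ring.inverse (s ^ α • (1 : 𝔸) - s ^ β • A)) ^ (m + 1)) := by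
  set a : ℝ := α - β with ha_def
  set c : ℝ := ((m : ℝ) + 1) * α - γ with hc_def
  have ha : 0 < a := sub_pos.mpr hαβ
  have hc : 0 < c := sub_pos.mpr hγ
  have hsa : 0 < s ^ a := Real.rpow_pos_of_pos hs a
  have hsα : 0 < s ^ α := Real.rpow_pos_of_pos hs α
  have hsc : 0 < s ^ c := Real.rpow_pos_of_pos hs c
  set x : 𝔸 := (s ^ a)⁻¹ • A with hx_def
  have hxnorm : ‖x‖ < 1 := by
    rw [hx_def, norm_smul, Real.norm_eq_abs, abs_of_pos (inv_pos.mpr hsa)]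
    rw [inv_mul_lt_iff₀ hsa, mul_one]
    exact hA
  set G : 𝔸 := Ring.inverse (1 - x) with hG_def
  have hxunit : IsUnit ((1 : 𝔸) - x) := isUnit_one_sub_of_norm_lt_one hxnorm
  -- factorization
  have hβα : s ^ α * (s ^ a)⁻¹ = s ^ β := by
    have : s ^ β * s ^ a = s ^ α := by
      rw [← Real.rpow_add hs]; norm_num [ha_def]
    rw [← this]
    field_simp
  have hfac : s ^ α • (1 : 𝔸) - s ^ β • A = s ^ α • ((1 : 𝔸) - x) := by
    rw [smul_sub, hx_def, smul_smul, hβα]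
  -- the unit
  have hAl : ∀ (r : ℝ) (y z : 𝔸), (r • y) * z = r • (y * z) := fun r y z => smul_mul_assoc r y z
  have hmulGone : ((1 : 𝔸) - x) * G = 1 := Ring.mul_inverse_cancel _ hxunit
  have hmulGone' : G * ((1 : 𝔸) - x) = 1 := Ring.inverse_mul_cancel _ hxunit
  let U : 𝔸ˣ :=
    { val := s ^ α • (1 : 𝔸) - s ^ β • A
      inv := (s ^ α)⁻¹ • G
      val_inv := by
        rw [hfac, smul_mul_smul_comm, mul_inv_cancel₀ hsα.ne', hmulGone, one_smul]
      inv_val := by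
        rw [hfac, smul_mul_smul_comm, inv_mul_cancel₀ hsα.ne', hmulGone', one_smul] }
  have hUval : (U : 𝔸) = s ^ α • (1 : 𝔸) - s ^ β • A := rfl
  have hUunit : IsUnit (s ^ α • (1 : 𝔸) - s ^ β • A) := ⟨U, rfl⟩
  refine ⟨hUunit, ?_⟩
  have hinv : Ring.inverse (s ^ α • (1 : 𝔸) - s ^ β • A) = (s ^ α)⁻¹ • G := by
    rw [← hUval, Ring.inverse_unit U]; rfl
  -- notation for the series terms
  set C : ℕ → ℝ := fun k => ((k + m).choose m : ℝ) with hC_def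
  set w : ℕ → ℝ := fun k => C k / Real.Gamma ((k : ℝ) * a + c) with hw_def
  set v : ℕ → 𝔸 := fun k => A ^ k * B ^ m with hv_def
  set Jφ : ℕ → ℝ → ℝ :=
    fun k t => t ^ ((k : ℝ) * a + c - 1) * Real.exp (-(s * t)) * w k with hJφ_def
  set F : ℕ → ℝ → 𝔸 := fun k t => Jφ k t • v k with hF_def
  have hw0 : ∀ k, 0 ≤ w k := by
    intro k
    have hΓ : 0 < Real.Gamma ((k : ℝ) * a + c) := Real.Gamma_pos_of_pos (by positivity)
    have hC0 : (0:ℝ) ≤ C k := by simp [hC_def]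
    positivity
  -- pointwise identity of the integrand with the series of F's
  have hpt : ∀ t ∈ Set.Ioi (0:ℝ), Real.exp (-(s * t)) •
        ((t ^ (c - 1)) • (mlThree a c m ((t ^ a) • A) * B ^ m)) = ∑' k : ℕ, F k t := by
    intro t ht
    rw [Set.mem_Ioi] at ht
    have hsummable : Summable fun k : ℕ => w k • ((t ^ a) • A) ^ k := by
      refine Summable.of_norm (Summable.of_nonneg_of_le (fun k => norm_nonneg _) (fun k => ?_)
        (summable_prabhakar m ha hc (R := ‖(t ^ a) • A‖) (norm_nonneg _)))
      rw [norm_smul, Real.norm_eq_abs, abs_of_nonneg (hw0 k)]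
      exact mul_le_mul_of_nonneg_left (norm_pow_le _ k) (hw0 k)
    have hml : mlThree a c m ((t ^ a) • A) = ∑' k : ℕ, w k • ((t ^ a) • A) ^ k := rfl
    have h1 : HasSum (fun k : ℕ => w k • ((t ^ a) • A) ^ k) (mlThree a c m ((t ^ a) • A)) := by
      rw [hml]; exact hsummable.hasSum
    have h4 := ((h1.mul_right (B ^ m)).const_smul (t ^ (c - 1))).const_smul
      (Real.exp (-(s * t)))
    rw [← h4.tsum_eq]
    refine tsum_congr fun k => ?_
    simp only [hF_def, hJφ_def, hv_def, smul_pow, smul_smul, smul_mul_assoc]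
    congr 1
    rw [← Real.rpow_natCast (t ^ a) k, ← Real.rpow_mul ht.le,
      show (k : ℝ) * a + c - 1 = (c - 1) + a * (k : ℝ) by ring, Real.rpow_add ht]
    ring
  rw [setIntegral_congr_fun measurableSet_Ioi hpt]
  -- integrability of each term
  have hint : ∀ k : ℕ, Integrable (F k) (volume.restrict (Set.Ioi (0:ℝ))) := by
    intro k
    have hq : (-1:ℝ) < (k : ℝ) * a + c - 1 := by
      have : (0:ℝ) ≤ (k : ℝ) * a := by positivity
      linarith
    have base := integrableOn_rpow_mul_exp_neg_mul_rpow (p := 1) hq one_pos hs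
    have base' : IntegrableOn (fun t : ℝ => t ^ ((k : ℝ) * a + c - 1) * Real.exp (-(s * t)))
        (Set.Ioi (0:ℝ)) := by
      refine base.congr_fun (fun t _ => ?_) measurableSet_Ioi
      simp only [Real.rpow_one, neg_mul]
    exact ((base'.mul_const (w k)).smul_const (v k))
  -- value of each integral
  have hsplit : ∀ k : ℕ, (1 / s : ℝ) ^ ((k : ℝ) * a + c) = ((s ^ a)⁻¹) ^ k * (s ^ c)⁻¹ := by
    intro k
    rw [one_div, show ((k : ℝ) * a + c) = a * (k : ℝ) + c by ring,
      Real.rpow_add (inv_pos.mpr hs), Real.rpow_mul (inv_pos.mpr hs).le,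
      Real.rpow_natCast, Real.inv_rpow hs.le, Real.inv_rpow hs.le]
  have hΓw : ∀ k : ℕ, Real.Gamma ((k : ℝ) * a + c) * w k = C k := by
    intro k
    have hΓ : Real.Gamma ((k : ℝ) * a + c) ≠ 0 :=
      (Real.Gamma_pos_of_pos (by positivity)).ne'
    rw [hw_def]
    field_simp
  have hIφ : ∀ k : ℕ, ∫ t in Set.Ioi (0:ℝ), Jφ k t
      = C k * ((s ^ a)⁻¹) ^ k * (s ^ c)⁻¹ := by
    intro k
    have hp : (0:ℝ) < (k : ℝ) * a + c := by positivity
    have hΓint := Real.integral_rpow_mul_exp_neg_mul_Ioi hp hs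
    calc ∫ t in Set.Ioi (0:ℝ), Jφ k t
        = (∫ t in Set.Ioi (0:ℝ), t ^ ((k : ℝ) * a + c - 1) * Real.exp (-(s * t))) * w k := by
          rw [hJφ_def]
          exact integral_mul_const (w k) _
      _ = (1 / s) ^ ((k : ℝ) * a + c) * Real.Gamma ((k : ℝ) * a + c) * w k := by rw [hΓint]
      _ = C k * ((s ^ a)⁻¹) ^ k * (s ^ c)⁻¹ := by
          rw [mul_assoc, hΓw, hsplit]; ring
  have hIF : ∀ k : ℕ, ∫ t in Set.Ioi (0:ℝ), F k t
      = (C k * ((s ^ a)⁻¹) ^ k * (s ^ c)⁻¹) • v k := by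
    intro k
    rw [hF_def]
    simp only
    rw [integral_smul_const, hIφ]
  -- summability of the integrals of norms
  set ρ : ℝ := (s ^ a)⁻¹ * ‖A‖ with hρ_def
  have hρ0 : 0 ≤ ρ := by positivity
  have hρx : ‖x‖ = ρ := by
    rw [hx_def, norm_smul, Real.norm_eq_abs, abs_of_pos (inv_pos.mpr hsa)]
  have hρlt : ρ < 1 := hρx ▸ hxnorm
  have hρnorm : ‖ρ‖ < 1 := by rwa [Real.norm_eq_abs, abs_of_nonneg hρ0]
  have SR : Summable fun k : ℕ => C k * ρ ^ k := by
    refine ((geomPow hρnorm m).1).congr fun k => ?_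
    rw [smul_eq_mul, Real.norm_eq_abs, abs_of_nonneg (by positivity)]
  have hintnorm : ∀ k : ℕ, ∫ t in Set.Ioi (0:ℝ), ‖F k t‖
      = (C k * ((s ^ a)⁻¹) ^ k * (s ^ c)⁻¹) * ‖v k‖ := by
    intro k
    have h1 : ∀ t ∈ Set.Ioi (0:ℝ), ‖F k t‖ = Jφ k t * ‖v k‖ := by
      intro t ht
      rw [Set.mem_Ioi] at ht
      rw [hF_def]
      simp only
      rw [norm_smul, Real.norm_eq_abs, abs_of_nonneg]
      rw [hJφ_def]
      simp only
      exact mul_nonneg (mul_nonneg (Real.rpow_nonneg ht.le _) (Real.exp_pos _).le) (hw0 k)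
    rw [setIntegral_congr_fun measurableSet_Ioi h1, integral_mul_const, hIφ]
  have hnormint : Summable fun k : ℕ => ∫ t in Set.Ioi (0:ℝ), ‖F k t‖ := by
    have hb : Summable fun k : ℕ => (s ^ c)⁻¹ * ‖B ^ m‖ * (C k * ρ ^ k) := SR.mul_left _
    refine Summable.of_nonneg_of_le
      (fun k => integral_nonneg fun t => norm_nonneg _) (fun k => ?_) hb
    rw [hintnorm k]
    have hv : ‖v k‖ ≤ ‖A‖ ^ k * ‖B ^ m‖ := by
      rw [hv_def]
      exact (norm_mul_le _ _).trans (by gcongr; exact norm_pow_le A k)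
    have hC0 : (0:ℝ) ≤ C k := by simp [hC_def]
    calc C k * ((s ^ a)⁻¹) ^ k * (s ^ c)⁻¹ * ‖v k‖
        ≤ C k * ((s ^ a)⁻¹) ^ k * (s ^ c)⁻¹ * (‖A‖ ^ k * ‖B ^ m‖) := by
          have : (0:ℝ) ≤ C k * ((s ^ a)⁻¹) ^ k * (s ^ c)⁻¹ := by positivity
          exact mul_le_mul_of_nonneg_left hv this
      _ = (s ^ c)⁻¹ * ‖B ^ m‖ * (C k * ρ ^ k) := by
          rw [hρ_def, mul_pow]; ring
  -- interchange sum and integral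
  rw [← integral_tsum_of_summable_integral_norm hint hnormint]
  have hxsum : Summable fun k : ℕ => C k • x ^ k := ((geomPow hxnorm m).1).of_norm
  have h5 := ((hxsum.hasSum.mul_right (B ^ m)).const_smul ((s ^ c)⁻¹))
  calc ∑' k : ℕ, ∫ t in Set.Ioi (0:ℝ), F k t
      = ∑' k : ℕ, (s ^ c)⁻¹ • ((C k • x ^ k) * B ^ m) := by
        refine tsum_congr fun k => ?_
        rw [hIF k]
        simp only [hx_def, hv_def, smul_pow, smul_smul, smul_mul_assoc]
        congr 1
        ring
    _ = (s ^ c)⁻¹ • ((∑' k : ℕ, C k • x ^ k) * B ^ m) := h5.tsum_eq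
    _ = (s ^ c)⁻¹ • (G ^ (m + 1) * B ^ m) := by
        rw [show (∑' k : ℕ, C k • x ^ k) = G ^ (m+1) from (geomPow hxnorm m).2]
    _ = (s ^ γ) • (B ^ m * (Ring.inverse (s ^ α • (1:𝔸) - s ^ β • A)) ^ (m + 1)) := by
        -- commutation of B^m with G^(m+1)
        have h1 : Commute B A := hAB.symm
        have h2 : Commute B x := by rw [hx_def]; exact h1.smul_right _
        have h3 : Commute B ((1:𝔸) - x) := (Commute.one_right B).sub_right h2
        obtain ⟨u', hu'⟩ := hxunit
        have h4 : Commute B G := by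
          rw [hG_def, ← hu', Ring.inverse_unit]
          exact Commute.units_inv_right (by rw [hu']; exact h3)
        have hcomm : B ^ m * G ^ (m + 1) = G ^ (m + 1) * B ^ m := (h4.pow_pow m (m+1)).eq
        -- scalar identity
        have hpow : (s ^ α) ^ (m + 1) = s ^ (α * ((m:ℝ) + 1)) := by
          rw [← Real.rpow_natCast (s ^ α) (m + 1), ← Real.rpow_mul hs.le]
          congr 1
          push_cast
          ring
        have hgc : s ^ γ * s ^ c = (s ^ α) ^ (m + 1) := by
          rw [hpow, ← Real.rpow_add hs]
          congr 1
          rw [hc_def]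
          ring
        have hscalar : (s ^ c)⁻¹ = s ^ γ * ((s ^ α)⁻¹) ^ (m + 1) := by
          rw [inv_pow, ← hgc, mul_inv, ← mul_assoc,
            mul_inv_cancel₀ (Real.rpow_pos_of_pos hs γ).ne', one_mul]
        rw [hinv, smul_pow, mul_smul_comm, smul_smul, hcomm, ← hscalar]
end

section
/- Let A, B be elements of a Banach algebra with identity I, let α > β > 0 be real, and let s > 0 be real with s^{α−β} > ‖A‖ and ‖(s^{α−β}I − A)^{−1} B‖ < s^{β}. Then s^{α}I − A s^{β} − B is invertible and (s^{α}I − A s^{β} − B)^{−1} = ∑_{m=0}^∞ s^{−(m+1)β} ((s^{α−β}I − A)^{−1} B)^{m} (s^{α−β}I − A)^{−1}, the series converging in norm. -/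
/-- Resolvent expansion with nonpermutable operators: if `s^{α−β} > ‖A‖` and
`‖(s^{α−β}I − A)^{−1} B‖ < s^β`, then `s^α I − A s^β − B` is invertible and its inverse is
the norm-convergent series `∑_m s^{−(m+1)β} ((s^{α−β}I − A)^{−1} B)^m (s^{α−β}I − A)^{−1}`. -/
theorem resolvent_series_nonpermutable {𝔸 : Type*} [NormedRing 𝔸] [NormOneClass 𝔸]
    [NormedAlgebra ℝ 𝔸] [CompleteSpace 𝔸] (A B : 𝔸) (α β : ℝ) (hβ : 0 < β) (hαβ : β < α)
    (s : ℝ) (hs : 0 < s) (hA : ‖A‖ < s ^ (α - β))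
    (hB : ‖Ring.inverse (s ^ (α - β) • (1 : 𝔸) - A) * B‖ < s ^ β) :
    IsUnit (s ^ α • (1 : 𝔸) - s ^ β • A - B) ∧
    Summable (fun m : ℕ =>
      ‖(s ^ (-((m : ℝ) + 1) * β)) •
        ((Ring.inverse (s ^ (α - β) • (1 : 𝔸) - A) * B) ^ m *
          Ring.inverse (s ^ (α - β) • (1 : 𝔸) - A))‖) ∧
    Ring.inverse (s ^ α • (1 : 𝔸) - s ^ β • A - B)
      = ∑' m : ℕ, (s ^ (-((m : ℝ) + 1) * β)) •
          ((Ring.inverse (s ^ (α - β) • (1 : 𝔸) - A) * B) ^ m *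
            Ring.inverse (s ^ (α - β) • (1 : 𝔸) - A)) := by
  have ht : (0:ℝ) < s ^ (α - β) := Real.rpow_pos_of_pos hs _
  have hsb : (0:ℝ) < s ^ β := Real.rpow_pos_of_pos hs _
  set t : ℝ := s ^ (α - β) with ht_def
  set U : 𝔸 := t • (1:𝔸) - A with hU_def
  -- `U` is a unit
  have hA' : ‖t⁻¹ • A‖ < 1 := by
    rw [norm_smul, Real.norm_eq_abs, abs_of_pos (inv_pos.2 ht), inv_mul_eq_div, div_lt_one ht]
    exact hA
  have hUfac : U = t • ((1:𝔸) - t⁻¹ • A) := by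
    rw [smul_sub, smul_inv_smul₀ ht.ne']
  have hUunit : IsUnit U := by
    rw [hUfac, Algebra.smul_def]
    exact ((isUnit_iff_ne_zero.2 ht.ne').map (algebraMap ℝ 𝔸)).mul (Units.oneSub _ hA').isUnit
  set R : 𝔸 := Ring.inverse U with hR_def
  have hRU : R * U = 1 := Ring.inverse_mul_cancel U hUunit
  have hUR : U * R = 1 := Ring.mul_inverse_cancel U hUunit
  set C : 𝔸 := R * B with hC_def
  set x : 𝔸 := (s ^ (-β)) • C with hx_def
  have hsnb : s ^ (-β) = (s ^ β)⁻¹ := Real.rpow_neg hs.le β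
  have hsnb_pos : (0:ℝ) < s ^ (-β) := Real.rpow_pos_of_pos hs _
  have hx : ‖x‖ < 1 := by
    rw [hx_def, norm_smul, Real.norm_eq_abs, abs_of_pos hsnb_pos, hsnb, inv_mul_eq_div,
      div_lt_one hsb]
    exact hB
  have hgeo : Summable fun m : ℕ => x ^ m := summable_geometric_of_norm_lt_one hx
  -- rewrite of the general term
  have hterm : ∀ m : ℕ, (s ^ (-((m : ℝ) + 1) * β)) • (C ^ m * R)
      = (s ^ (-β)) • (x ^ m * R) := by
    intro m
    have h1 : (s : ℝ) ^ (-((m : ℝ) + 1) * β) = (s ^ (-β)) ^ (m + 1) := by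
      rw [show -((m : ℝ) + 1) * β = (-β) * ((m : ℝ) + 1) by ring, Real.rpow_mul hs.le]
      rw [show ((m : ℝ) + 1) = ((m + 1 : ℕ) : ℝ) by push_cast; ring, Real.rpow_natCast]
    rw [h1, hx_def, smul_pow, smul_mul_assoc, smul_smul, pow_succ, mul_comm]
  -- summability of norms
  have hsum : Summable (fun m : ℕ => ‖(s ^ (-((m : ℝ) + 1) * β)) • (C ^ m * R)‖) := by
    refine Summable.of_nonneg_of_le (f := fun m : ℕ => (s ^ (-β)) * ‖R‖ * ‖x‖ ^ m)
      (fun m => norm_nonneg _) ?_ ?_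
    · intro m
      rw [hterm m, norm_smul, Real.norm_eq_abs, abs_of_pos hsnb_pos]
      calc s ^ (-β) * ‖x ^ m * R‖ ≤ s ^ (-β) * (‖x ^ m‖ * ‖R‖) := by
            gcongr; exact norm_mul_le _ _
        _ ≤ s ^ (-β) * (‖x‖ ^ m * ‖R‖) := by gcongr; exact norm_pow_le x m
        _ = s ^ (-β) * ‖R‖ * ‖x‖ ^ m := by ring
    · exact (summable_geometric_of_lt_one (norm_nonneg x) hx).mul_left _
  -- the candidate inverse
  set T : 𝔸 := (s ^ (-β)) • ((∑' m : ℕ, x ^ m) * R) with hT_def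
  have hTsum : ∑' m : ℕ, (s ^ (-((m : ℝ) + 1) * β)) • (C ^ m * R) = T := by
    rw [tsum_congr hterm, tsum_const_smul'' _, hgeo.tsum_mul_right R]
  -- factorization
  have hsβα : s ^ β * t = s ^ α := by
    rw [ht_def, ← Real.rpow_add hs]; ring_nf
  have hDfac : s ^ α • (1:𝔸) - s ^ β • A - B = U * ((s ^ β) • ((1:𝔸) - x)) := by
    have hUC : U * C = B := by rw [hC_def, ← mul_assoc, hUR, one_mul]
    have hsx : (s ^ β) • x = C := by
      rw [hx_def, smul_smul, hsnb, mul_inv_cancel₀ hsb.ne', one_smul]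
    have h2 : (s ^ β) • ((1:𝔸) - x) = (s ^ β) • (1:𝔸) - C := by rw [smul_sub, hsx]
    rw [h2, mul_sub, hUC]
    congr 1
    rw [mul_smul_comm, mul_one, hU_def, smul_sub, smul_smul, hsβα]
  have hss : s ^ (-β) * s ^ β = 1 := by rw [hsnb, inv_mul_cancel₀ hsb.ne']
  have hss' : s ^ β * s ^ (-β) = 1 := by rw [hsnb, mul_inv_cancel₀ hsb.ne']
  have hmulTD : T * (s ^ α • (1:𝔸) - s ^ β • A - B) = 1 := by
    rw [hDfac, hT_def, mul_smul_comm (s ^ β) U, smul_mul_assoc, mul_smul_comm, smul_smul,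
      hss, one_smul, mul_assoc _ R, ← mul_assoc R U, hRU, one_mul, geom_series_mul_neg x hx]
  have hmulDT : (s ^ α • (1:𝔸) - s ^ β • A - B) * T = 1 := by
    rw [hDfac, hT_def, mul_smul_comm (s ^ β) U, smul_mul_assoc, mul_smul_comm, smul_smul,
      hss', one_smul, mul_assoc U, ← mul_assoc ((1:𝔸) - x), mul_neg_geom_series x hx,
      one_mul, hUR]
  set u : 𝔸ˣ := ⟨s ^ α • (1:𝔸) - s ^ β • A - B, T, hmulDT, hmulTD⟩ with hu_def
  refine ⟨u.isUnit, hsum, ?_⟩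
  have : Ring.inverse (s ^ α • (1:𝔸) - s ^ β • A - B) = T := by
    have := Ring.inverse_unit u
    simpa [hu_def] using this
  rw [this, ← hTsum]
end
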